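/- arXiv:1206.5645 — 3 statements merged into one kernel-verified Lean document; each statement's English description precedes it below -/
import Mathlib

section
/- If u = p/q with p, q positive coprime integers and p* + q* is odd, then the set E_u = E + uE contains a nonempty open interval and E_u is the closure of its interior. -/
open MeasureTheory

/-- The Cantor-like set `E = {∑_{j=1}^∞ ε_j 4^{-j} : ε_j ∈ {0,1}}`. -/
def E : Set ℝ :=
  {x | ∃ ε : ℕ → ℝ, (∀ j, ε j = 0 ∨ ε j = 1) ∧ x = ∑' j : ℕ, ε j / 4 ^ (j + 1)}

/-- `E_u = E + u·E`. -/
def Eu (u : ℝ) : Set ℝ := {z | ∃ x ∈ E, ∃ y ∈ E, z = x + u * y}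

/-- `n* `: the first nonzero digit from the right of `n` in base `b`,
i.e. `(n / b^{j*}) % b` where `j*` is the largest `j` with `b^j ∣ n`. -/
def fstDigit (b n : ℕ) : ℕ := n / b ^ padicValNat b n % b

namespace EuAux

open scoped Classical


/-- The self-similar digit set `T p q = {∑ (p ε_j + q δ_j)/4^{j+1}}`. -/
def T (p q : ℕ) : Set ℝ :=
  {x | ∃ ε δ : ℕ → ℝ, (∀ j, ε j = 0 ∨ ε j = 1) ∧ (∀ j, δ j = 0 ∨ δ j = 1) ∧
    x = ∑' j : ℕ, ((p : ℝ) * ε j + (q : ℝ) * δ j) / 4 ^ (j + 1)}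

lemma summable_digit {a : ℕ → ℝ} {C : ℝ} (h : ∀ j, |a j| ≤ C) :
    Summable fun j => a j / 4 ^ (j + 1) := by
  have hC : 0 ≤ C := le_trans (abs_nonneg _) (h 0)
  refine Summable.of_norm_bounded (g := fun j => C * (1 / 4 : ℝ) ^ j)
    ((summable_geometric_of_lt_one (by norm_num) (by norm_num)).mul_left C) (fun j => ?_)
  have h4 : (0 : ℝ) < 4 ^ (j + 1) := by positivity
  rw [Real.norm_eq_abs, abs_div, abs_of_pos h4, div_le_iff₀ h4]
  have key : ((1 : ℝ) / 4) ^ j * 4 ^ (j + 1) = 4 := by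
    rw [one_div, inv_pow, pow_succ]
    field_simp
  calc |a j| ≤ C := h j
    _ = C * 1 := (mul_one C).symm
    _ ≤ C * 4 := by nlinarith
    _ = C * (((1 : ℝ) / 4) ^ j * 4 ^ (j + 1)) := by rw [key]
    _ = C * ((1 : ℝ) / 4) ^ j * 4 ^ (j + 1) := by ring

lemma tsum_digit_nonneg {a : ℕ → ℝ} (h0 : ∀ j, 0 ≤ a j) :
    0 ≤ ∑' j : ℕ, a j / 4 ^ (j + 1) :=
  tsum_nonneg fun j => div_nonneg (h0 j) (by positivity)

lemma tsum_digit_le {a : ℕ → ℝ} {C : ℝ} (h0 : ∀ j, 0 ≤ a j) (hC : ∀ j, a j ≤ C) :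
    ∑' j : ℕ, a j / 4 ^ (j + 1) ≤ C := by
  have hC0 : 0 ≤ C := le_trans (h0 0) (hC 0)
  have hsum : Summable fun j : ℕ => a j / 4 ^ (j + 1) :=
    summable_digit (fun j => by rw [abs_of_nonneg (h0 j)]; exact hC j)
  have hg : Summable fun j : ℕ => C / 4 * (1 / 4 : ℝ) ^ j :=
    (summable_geometric_of_lt_one (by norm_num) (by norm_num)).mul_left _
  have hle : ∀ j : ℕ, a j / 4 ^ (j + 1) ≤ C / 4 * (1 / 4 : ℝ) ^ j := by
    intro j
    have : (4 : ℝ) ^ (j + 1) ≠ 0 := by positivity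
    rw [div_le_iff₀ (by positivity : (0:ℝ) < 4 ^ (j + 1))]
    have key : C / 4 * ((1 : ℝ) / 4) ^ j * 4 ^ (j + 1) = C := by
      rw [one_div, inv_pow, pow_succ]
      have h4 : (4:ℝ)^j ≠ 0 := by positivity
      field_simp
    rw [key]
    exact hC j
  calc ∑' j : ℕ, a j / 4 ^ (j + 1) ≤ ∑' j : ℕ, C / 4 * (1 / 4 : ℝ) ^ j :=
        Summable.tsum_le_tsum hle hsum hg
    _ = C / 4 * (1 - 1 / 4)⁻¹ := by
        rw [tsum_mul_left, tsum_geometric_of_lt_one (by norm_num) (by norm_num)]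
    _ ≤ C := by norm_num; linarith

/-- Concatenation of a finite prefix with a tail, as a tsum identity. -/
lemma tsum_concat {a b : ℕ → ℝ} (hb : Summable fun j => b j / 4 ^ (j + 1)) (n : ℕ) :
    ∑' j : ℕ, (if j < n then a j else b (j - n)) / 4 ^ (j + 1)
      = (∑ j ∈ Finset.range n, a j / 4 ^ (j + 1)) + (∑' j : ℕ, b j / 4 ^ (j + 1)) / 4 ^ n := by
  set h : ℕ → ℝ := fun j => (if j < n then a j else b (j - n)) / 4 ^ (j + 1) with hh
  have hshift : ∀ i : ℕ, h (i + n) = b i / 4 ^ (i + 1) / 4 ^ n := by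
    intro i
    simp only [hh]
    rw [if_neg (by omega), Nat.add_sub_cancel, div_div, ← pow_add]
    have : i + 1 + n = i + n + 1 := by omega
    rw [this]
  have hsum : Summable h := by
    rw [← summable_nat_add_iff n]
    simp only [hshift]
    exact hb.div_const _
  have := Summable.sum_add_tsum_nat_add (f := h) n hsum
  rw [← this]
  congr 1
  · exact Finset.sum_congr rfl fun j hj => by
      simp only [hh, if_pos (Finset.mem_range.mp hj)]
  · simp only [hshift]
    exact tsum_div_const

lemma tsum_shift {g : ℕ → ℝ} (hg : Summable fun j => g j / 4 ^ (j + 1)) (s : ℕ) :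
    ∑' j : ℕ, (if j < s then 0 else g (j - s)) / 4 ^ (j + 1)
      = (∑' j : ℕ, g j / 4 ^ (j + 1)) / 4 ^ s := by
  have := tsum_concat (a := fun _ => (0 : ℝ)) hg s
  simpa using this

lemma abs_digit_le (p q : ℕ) {ε δ : ℕ → ℝ} (hε : ∀ j, ε j = 0 ∨ ε j = 1)
    (hδ : ∀ j, δ j = 0 ∨ δ j = 1) (j : ℕ) :
    |(p : ℝ) * ε j + (q : ℝ) * δ j| ≤ (p : ℝ) + q := by
  have hp : (0:ℝ) ≤ p := Nat.cast_nonneg p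
  have hq : (0:ℝ) ≤ q := Nat.cast_nonneg q
  rcases hε j with h1 | h1 <;> rcases hδ j with h2 | h2 <;> rw [h1, h2, abs_le] <;>
    constructor <;> nlinarith

lemma boolish_ite (f : ℕ → Bool) : ∀ j, (if f j then (1:ℝ) else 0) = 0 ∨ (if f j then (1:ℝ) else 0) = 1 := by
  intro j; by_cases h : f j <;> simp [h]

lemma summable_boolish (p q : ℕ) {ε δ : ℕ → ℝ} (hε : ∀ j, ε j = 0 ∨ ε j = 1)
    (hδ : ∀ j, δ j = 0 ∨ δ j = 1) :
    Summable fun j => ((p : ℝ) * ε j + (q : ℝ) * δ j) / 4 ^ (j + 1) :=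
  summable_digit (abs_digit_le p q hε hδ)

lemma isClosed_T (p q : ℕ) : IsClosed (T p q) := by
  set φ : (ℕ → Bool × Bool) → ℝ := fun f =>
    ∑' j : ℕ, ((p : ℝ) * (if (f j).1 then 1 else 0) + (q : ℝ) * (if (f j).2 then 1 else 0))
      / 4 ^ (j + 1) with hφ
  have hcont : Continuous φ := by
    apply continuous_tsum (u := fun j : ℕ => ((p : ℝ) + q) / 4 ^ (j + 1))
    · intro j
      have hc : Continuous fun y : Bool × Bool =>
          ((p : ℝ) * (if y.1 then 1 else 0) + (q : ℝ) * (if y.2 then 1 else 0)) / 4 ^ (j + 1) :=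
        continuous_of_discreteTopology
      exact hc.comp (continuous_apply j)
    · exact summable_digit (a := fun _ => (p : ℝ) + q) (C := (p : ℝ) + q)
        (fun j => by rw [abs_of_nonneg (by positivity)])
    · intro j f
      rw [Real.norm_eq_abs, abs_div, abs_of_pos (by positivity : (0:ℝ) < 4 ^ (j + 1))]
      exact div_le_div_of_nonneg_right
        (abs_digit_le p q (boolish_ite fun j => (f j).1) (boolish_ite fun j => (f j).2) j)
        (by positivity) |>.trans_eq rfl
  have hrange : T p q = Set.range φ := by
    ext x
    constructor
    · rintro ⟨ε, δ, hε, hδ, rfl⟩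
      refine ⟨fun j => (if ε j = 1 then true else false, if δ j = 1 then true else false), ?_⟩
      simp only [hφ]
      apply tsum_congr
      intro j
      congr 2
      · rcases hε j with h | h <;> simp [h]
      · rcases hδ j with h | h <;> simp [h]
    · rintro ⟨f, rfl⟩
      exact ⟨fun j => if (f j).1 then 1 else 0, fun j => if (f j).2 then 1 else 0,
        boolish_ite _, boolish_ite _, rfl⟩
  rw [hrange]
  exact (isCompact_range hcont).isClosed


/-- `{0, p, q, p+q}` is a complete residue system mod 4 (stated with signed residues). -/
def Complete4 (p q : ℕ) : Prop :=
  ∀ r : ℤ, ∃ e d : ℕ, e ≤ 1 ∧ d ≤ 1 ∧ (4 : ℤ) ∣ ((p : ℤ) * e + (q : ℤ) * d - r)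

lemma complete4_of (p q : ℕ) (hp : p % 4 = 2) (hq : q % 4 = 1 ∨ q % 4 = 3) :
    Complete4 p q := by
  intro r
  have h : r % 4 = 0 ∨ r % 4 = 1 ∨ r % 4 = 2 ∨ r % 4 = 3 := by omega
  rcases hq with hq | hq <;> rcases h with h | h | h | h
  · exact ⟨0, 0, by norm_num, by norm_num, by push_cast; omega⟩
  · exact ⟨0, 1, by norm_num, by norm_num, by push_cast; omega⟩
  · exact ⟨1, 0, by norm_num, by norm_num, by push_cast; omega⟩
  · exact ⟨1, 1, by norm_num, by norm_num, by push_cast; omega⟩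
  · exact ⟨0, 0, by norm_num, by norm_num, by push_cast; omega⟩
  · exact ⟨1, 1, by norm_num, by norm_num, by push_cast; omega⟩
  · exact ⟨1, 0, by norm_num, by norm_num, by push_cast; omega⟩
  · exact ⟨0, 1, by norm_num, by norm_num, by push_cast; omega⟩

lemma complete4_swap {p q : ℕ} (h : Complete4 p q) : Complete4 q p := by
  intro r
  obtain ⟨e, d, he, hd, hdvd⟩ := h r
  refine ⟨d, e, hd, he, ?_⟩
  rw [show (q:ℤ) * d + (p:ℤ) * e - r = (p:ℤ) * e + (q:ℤ) * d - r by ring]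
  exact hdvd

lemma geom4_le (n : ℕ) : (∑ j ∈ Finset.range n, (4 : ℤ) ^ j) ≤ 4 ^ n := by
  induction n with
  | zero => simp
  | succ n ih =>
    rw [Finset.sum_range_succ, pow_succ]
    have : (0:ℤ) < 4 ^ n := by positivity
    linarith

lemma digits_complete {p q : ℕ} (hc : Complete4 p q) (n : ℕ) :
    ∀ r : ℤ, ∃ ε δ : ℕ → ℕ, (∀ j, ε j ≤ 1) ∧ (∀ j, δ j ≤ 1) ∧
      (4 : ℤ) ^ n ∣ ((∑ j ∈ Finset.range n, ((p : ℤ) * ε j + (q : ℤ) * δ j) * 4 ^ j) - r) := by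
  induction n with
  | zero =>
    intro r
    exact ⟨fun _ => 0, fun _ => 0, fun _ => by norm_num, fun _ => by norm_num,
      by simpa using one_dvd _⟩
  | succ n ih =>
    intro r
    obtain ⟨e, d, he, hd, hdvd⟩ := hc r
    obtain ⟨k, hk⟩ := hdvd
    obtain ⟨ε', δ', hε', hδ', hdvd'⟩ := ih (-k)
    refine ⟨fun j => if j = 0 then e else ε' (j - 1), fun j => if j = 0 then d else δ' (j - 1),
      fun j => by dsimp only; split <;> [exact he; exact hε' _],
      fun j => by dsimp only; split <;> [exact hd; exact hδ' _], ?_⟩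
    rw [Finset.sum_range_succ']
    have key : (∑ i ∈ Finset.range n,
        ((p : ℤ) * ((if i + 1 = 0 then e else ε' (i + 1 - 1) : ℕ) : ℤ) +
          (q : ℤ) * ((if i + 1 = 0 then d else δ' (i + 1 - 1) : ℕ) : ℤ)) * 4 ^ (i + 1))
        = 4 * ∑ i ∈ Finset.range n, ((p : ℤ) * ε' i + (q : ℤ) * δ' i) * 4 ^ i := by
      rw [Finset.mul_sum]
      refine Finset.sum_congr rfl fun i _ => ?_
      rw [if_neg (by omega), if_neg (by omega), Nat.add_sub_cancel, pow_succ]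
      ring
    rw [key]
    norm_num
    obtain ⟨m, hm⟩ := hdvd'
    refine ⟨m, ?_⟩
    rw [pow_succ]
    linear_combination 4 * hm + hk

lemma exists_approx {p q : ℕ} (hc : Complete4 p q) (n : ℕ) (r : ℤ) :
    ∃ t ∈ T p q, ∃ c : ℤ, t * 4 ^ n = (c : ℝ) ∧ (4 : ℤ) ^ n ∣ (c - r) ∧
      0 ≤ c ∧ c ≤ ((p : ℤ) + q) * 4 ^ n := by
  obtain ⟨ε, δ, hε, hδ, hdvd⟩ := digits_complete hc n r
  set c : ℤ := ∑ j ∈ Finset.range n, ((p : ℤ) * ε j + (q : ℤ) * δ j) * 4 ^ j with hcdef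
  set εr : ℕ → ℝ := fun j => if j < n then (ε (n - 1 - j) : ℝ) else 0 with hεr
  set δr : ℕ → ℝ := fun j => if j < n then (δ (n - 1 - j) : ℝ) else 0 with hδr
  have hεr01 : ∀ j, εr j = 0 ∨ εr j = 1 := by
    intro j
    simp only [hεr]
    split
    · have h2 : ε (n - 1 - j) = 0 ∨ ε (n - 1 - j) = 1 := by have := hε (n - 1 - j); omega
      rcases h2 with h2 | h2 <;> rw [h2] <;> simp
    · left; rfl
  have hδr01 : ∀ j, δr j = 0 ∨ δr j = 1 := by
    intro j
    simp only [hδr]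
    split
    · have h2 : δ (n - 1 - j) = 0 ∨ δ (n - 1 - j) = 1 := by have := hδ (n - 1 - j); omega
      rcases h2 with h2 | h2 <;> rw [h2] <;> simp
    · left; rfl
  refine ⟨∑' j : ℕ, ((p : ℝ) * εr j + (q : ℝ) * δr j) / 4 ^ (j + 1),
    ⟨εr, δr, hεr01, hδr01, rfl⟩, c, ?_, hdvd, ?_, ?_⟩
  · have hzero : ∀ j ∉ Finset.range n, ((p : ℝ) * εr j + (q : ℝ) * δr j) / 4 ^ (j + 1) = 0 := by
      intro j hj
      have hj' : ¬ j < n := fun h => hj (Finset.mem_range.mpr h)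
      simp only [hεr, hδr, if_neg hj']
      simp
    rw [tsum_eq_sum hzero, Finset.sum_mul]
    have hterm : ∀ j ∈ Finset.range n, ((p : ℝ) * εr j + (q : ℝ) * δr j) / 4 ^ (j + 1) * 4 ^ n
        = (fun i => ((p : ℝ) * ε i + (q : ℝ) * δ i) * 4 ^ i) (n - 1 - j) := by
      intro j hj
      have hj' : j < n := Finset.mem_range.mp hj
      simp only [hεr, hδr, if_pos hj']
      have hsplit : (4 : ℝ) ^ n = 4 ^ (j + 1) * 4 ^ (n - 1 - j) := by
        rw [← pow_add]; congr 1; omega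
      have h1 : (4 : ℝ) ^ (j + 1) ≠ 0 := by positivity
      rw [hsplit]
      field_simp
    rw [Finset.sum_congr rfl hterm,
      Finset.sum_range_reflect (fun i => ((p : ℝ) * (ε i : ℝ) + (q : ℝ) * (δ i : ℝ)) * 4 ^ i) n]
    rw [hcdef]
    push_cast
    rfl
  · apply Finset.sum_nonneg
    intro j _
    positivity
  · rw [hcdef]
    calc (∑ j ∈ Finset.range n, ((p : ℤ) * ε j + (q : ℤ) * δ j) * 4 ^ j)
        ≤ ∑ j ∈ Finset.range n, ((p : ℤ) + q) * 4 ^ j := by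
          apply Finset.sum_le_sum
          intro j _
          have e1 : ((ε j : ℤ)) ≤ 1 := by exact_mod_cast hε j
          have d1 : ((δ j : ℤ)) ≤ 1 := by exact_mod_cast hδ j
          have e0 : (0 : ℤ) ≤ (ε j : ℤ) := Int.natCast_nonneg _
          have d0 : (0 : ℤ) ≤ (δ j : ℤ) := Int.natCast_nonneg _
          have hp0 : (0 : ℤ) ≤ (p : ℤ) := Int.natCast_nonneg _
          have hq0 : (0 : ℤ) ≤ (q : ℤ) := Int.natCast_nonneg _
          have h4 : (0 : ℤ) ≤ 4 ^ j := by positivity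
          have : ((p : ℤ) * ε j + (q : ℤ) * δ j) ≤ (p : ℤ) + q := by nlinarith
          exact mul_le_mul_of_nonneg_right this h4
      _ = ((p : ℤ) + q) * ∑ j ∈ Finset.range n, (4 : ℤ) ^ j := by rw [Finset.mul_sum]
      _ ≤ ((p : ℤ) + q) * 4 ^ n := by
          apply mul_le_mul_of_nonneg_left (geom4_le n)
          positivity

lemma exists_int_translate {p q : ℕ} (hc : Complete4 p q) (x : ℝ) :
    ∃ k : ℤ, x + k ∈ T p q := by
  set lo : ℤ := -1 - ⌈|x|⌉ with hlo
  set hi : ℤ := (p : ℤ) + q + 1 + ⌈|x|⌉ with hhi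
  have main : ∀ n : ℕ, ∃ k : ℤ, (lo ≤ k ∧ k ≤ hi) ∧
      ∃ t ∈ T p q, |t - (x + k)| ≤ (1 / 4 : ℝ) ^ n := by
    intro n
    obtain ⟨t, ht, c, htc, hdvd, hc0, hcle⟩ := exists_approx hc n ⌊(4 : ℝ) ^ n * x⌋
    obtain ⟨k, hk⟩ := hdvd
    have h4n : (0 : ℝ) < 4 ^ n := by positivity
    have hfl1 : ((⌊(4 : ℝ) ^ n * x⌋ : ℝ)) ≤ 4 ^ n * x := Int.floor_le _
    have hfl2 : 4 ^ n * x - 1 < (⌊(4 : ℝ) ^ n * x⌋ : ℝ) := Int.sub_one_lt_floor _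
    -- real versions
    have hkR : (c : ℝ) - (⌊(4 : ℝ) ^ n * x⌋ : ℝ) = 4 ^ n * k := by
      have := congrArg (fun z : ℤ => (z : ℝ)) hk
      push_cast at this ⊢
      linarith [this]
    have htval : t = c / 4 ^ n := by
      field_simp at htc ⊢
      linarith [htc]
    have hc0R : (0 : ℝ) ≤ (c : ℝ) := by exact_mod_cast hc0
    have hcleR : (c : ℝ) ≤ ((p : ℝ) + q) * 4 ^ n := by exact_mod_cast hcle
    have hxle : x ≤ |x| := le_abs_self x
    have hxge : -|x| ≤ x := neg_abs_le x
    have hceil : |x| ≤ (⌈|x|⌉ : ℝ) := Int.le_ceil _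
    -- bounds on k
    have h1n : (1 : ℝ) ≤ 4 ^ n := one_le_pow₀ (by norm_num)
    have hx4 : 4 ^ n * (-|x|) ≤ 4 ^ n * x := mul_le_mul_of_nonneg_left hxge h4n.le
    have hx4a : 4 ^ n * x ≤ 4 ^ n * |x| := mul_le_mul_of_nonneg_left hxle h4n.le
    have hkRlo : (lo : ℝ) ≤ (k : ℝ) := by
      have h2 : 4 ^ n * (-|x|) ≤ 4 ^ n * (k : ℝ) := by linarith [hkR, hc0R, hfl1, hx4a]
      have h3 : -|x| ≤ (k : ℝ) := (mul_le_mul_iff_right₀ h4n).mp h2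
      have : (lo : ℝ) = -1 - (⌈|x|⌉ : ℝ) := by rw [hlo]; push_cast; ring
      rw [this]; linarith
    have hkRhi : (k : ℝ) ≤ (hi : ℝ) := by
      have h2 : 4 ^ n * (k : ℝ) ≤ 4 ^ n * ((p : ℝ) + q + 1 + |x|) := by
        have hd : 4 ^ n * ((p : ℝ) + q + 1 + |x|)
            = ((p : ℝ) + q) * 4 ^ n + 4 ^ n + 4 ^ n * |x| := by ring
        rw [hd]
        linarith [hkR, hcleR, hfl2, hx4]
      have h3 : (k : ℝ) ≤ (p : ℝ) + q + 1 + |x| := (mul_le_mul_iff_right₀ h4n).mp h2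
      have : (hi : ℝ) = (p : ℝ) + q + 1 + (⌈|x|⌉ : ℝ) := by rw [hhi]; push_cast; ring
      rw [this]; linarith
    refine ⟨k, ⟨by exact_mod_cast hkRlo, by exact_mod_cast hkRhi⟩, t, ht, ?_⟩
    have : t - (x + k) = ((⌊(4 : ℝ) ^ n * x⌋ : ℝ) - 4 ^ n * x) / 4 ^ n := by
      rw [htval]
      field_simp
      linarith [hkR]
    rw [this, abs_div, abs_of_pos h4n]
    rw [div_le_iff₀ h4n]
    have habs : |(⌊(4 : ℝ) ^ n * x⌋ : ℝ) - 4 ^ n * x| ≤ 1 := by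
      rw [abs_le]; constructor <;> linarith
    have : (1 / 4 : ℝ) ^ n * 4 ^ n = 1 := by
      rw [one_div, inv_pow]
      field_simp
    linarith [habs, this]
  choose K hKb t ht hdist using main
  haveI : Finite ↥(Set.Icc lo hi) := (Set.finite_Icc lo hi).to_subtype
  obtain ⟨⟨k, hkmem⟩, hfib⟩ := Finite.exists_infinite_fiber
    (fun n : ℕ => (⟨K n, Set.mem_Icc.mpr (hKb n)⟩ : ↥(Set.Icc lo hi)))
  have hinf : {n : ℕ | K n = k}.Infinite := by
    have h1 : Set.Infinite ((fun n : ℕ => (⟨K n, Set.mem_Icc.mpr (hKb n)⟩ : ↥(Set.Icc lo hi)))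
        ⁻¹' {⟨k, hkmem⟩}) := Set.infinite_coe_iff.mp hfib
    apply h1.mono
    intro n hn
    simp only [Set.mem_preimage, Set.mem_singleton_iff, Subtype.ext_iff] at hn
    exact hn
  refine ⟨k, ?_⟩
  have hcl : x + k ∈ closure (T p q) := by
    rw [Metric.mem_closure_iff]
    intro ε hε
    obtain ⟨m, hm⟩ := exists_pow_lt_of_lt_one hε (show (1 / 4 : ℝ) < 1 by norm_num)
    obtain ⟨n, hn, hmn⟩ := hinf.exists_gt m
    refine ⟨t n, ht n, ?_⟩
    have hKn : K n = k := hn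
    rw [dist_comm, Real.dist_eq]
    calc |t n - (x + k)| = |t n - (x + K n)| := by rw [hKn]
      _ ≤ (1 / 4 : ℝ) ^ n := hdist n
      _ ≤ (1 / 4 : ℝ) ^ m := by
          apply pow_le_pow_of_le_one (by norm_num) (by norm_num) hmn.le
      _ < ε := hm
  rwa [(isClosed_T p q).closure_eq] at hcl

lemma interior_nonempty {p q : ℕ} (hc : Complete4 p q) :
    (interior (T p q)).Nonempty := by
  have hcover : (⋃ k : ℤ, (fun x : ℝ => x + (k : ℝ)) ⁻¹' T p q) = Set.univ := by
    rw [Set.eq_univ_iff_forall]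
    intro x
    obtain ⟨k, hk⟩ := exists_int_translate hc x
    exact Set.mem_iUnion.mpr ⟨k, hk⟩
  obtain ⟨k, y, hy⟩ := nonempty_interior_of_iUnion_of_closed
    (fun k : ℤ => (isClosed_T p q).preimage (continuous_add_right _)) hcover
  have : (fun x : ℝ => x + (k : ℝ)) ⁻¹' T p q = (Homeomorph.addRight (k : ℝ)) ⁻¹' T p q := rfl
  rw [this, ← Homeomorph.preimage_interior] at hy
  exact ⟨y + k, hy⟩

lemma abs_mul_boolish {m : ℕ} {ε : ℕ → ℝ} (hε : ∀ j, ε j = 0 ∨ ε j = 1) (j : ℕ) :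
    |(m : ℝ) * ε j| ≤ (m : ℝ) := by
  rcases hε j with h | h <;> rw [h] <;> simp

lemma abs_boolish {ε : ℕ → ℝ} (hε : ∀ j, ε j = 0 ∨ ε j = 1) (j : ℕ) : |ε j| ≤ 1 := by
  rcases hε j with h | h <;> rw [h] <;> simp


lemma tsum_split (p q : ℕ) {ε δ : ℕ → ℝ} (hε : ∀ j, ε j = 0 ∨ ε j = 1)
    (hδ : ∀ j, δ j = 0 ∨ δ j = 1) :
    ∑' j : ℕ, ((p : ℝ) * ε j + (q : ℝ) * δ j) / 4 ^ (j + 1)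
      = (p : ℝ) * (∑' j : ℕ, ε j / 4 ^ (j + 1)) + (q : ℝ) * (∑' j : ℕ, δ j / 4 ^ (j + 1)) := by
  have hSe : Summable fun j : ℕ => ε j / 4 ^ (j + 1) := summable_digit (abs_boolish hε)
  have hSd : Summable fun j : ℕ => δ j / 4 ^ (j + 1) := summable_digit (abs_boolish hδ)
  calc ∑' j : ℕ, ((p : ℝ) * ε j + (q : ℝ) * δ j) / 4 ^ (j + 1)
      = ∑' j : ℕ, ((p : ℝ) * (ε j / 4 ^ (j + 1)) + (q : ℝ) * (δ j / 4 ^ (j + 1))) :=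
        tsum_congr fun j => by ring
    _ = (p : ℝ) * (∑' j : ℕ, ε j / 4 ^ (j + 1)) + (q : ℝ) * (∑' j : ℕ, δ j / 4 ^ (j + 1)) := by
        rw [Summable.tsum_add (hSe.mul_left _) (hSd.mul_left _), tsum_mul_left, tsum_mul_left]

/-- Scaling a reduced digit set into the full one. -/
lemma scale_mem {p q p' q' s₁ s₂ c : ℕ}
    (hp : (p : ℝ) = 4 ^ (s₁ + c) * p') (hq : (q : ℝ) = 4 ^ (s₂ + c) * q')
    {x : ℝ} (hx : x ∈ T p' q') : (4 : ℝ) ^ c * x ∈ T p q := by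
  obtain ⟨ε, δ, hε, hδ, rfl⟩ := hx
  set ε' : ℕ → ℝ := fun j => if j < s₁ then 0 else ε (j - s₁) with hε'def
  set δ' : ℕ → ℝ := fun j => if j < s₂ then 0 else δ (j - s₂) with hδ'def
  have hε' : ∀ j, ε' j = 0 ∨ ε' j = 1 := by
    intro j; simp only [hε'def]; split
    · left; rfl
    · exact hε _
  have hδ' : ∀ j, δ' j = 0 ∨ δ' j = 1 := by
    intro j; simp only [hδ'def]; split
    · left; rfl
    · exact hδ _
  refine ⟨ε', δ', hε', hδ', ?_⟩
  have hSe : Summable fun j : ℕ => ε j / 4 ^ (j + 1) := summable_digit (abs_boolish hε)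
  have hSd : Summable fun j : ℕ => δ j / 4 ^ (j + 1) := summable_digit (abs_boolish hδ)
  rw [tsum_split p q hε' hδ', tsum_split p' q' hε hδ]
  have he : ∑' j : ℕ, ε' j / 4 ^ (j + 1) = (∑' j : ℕ, ε j / 4 ^ (j + 1)) / 4 ^ s₁ := by
    rw [← tsum_shift hSe s₁]
  have hd : ∑' j : ℕ, δ' j / 4 ^ (j + 1) = (∑' j : ℕ, δ j / 4 ^ (j + 1)) / 4 ^ s₂ := by
    rw [← tsum_shift hSd s₂]
  rw [he, hd, hp, hq, pow_add, pow_add]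
  have h1 : (4 : ℝ) ^ s₁ ≠ 0 := by positivity
  have h2 : (4 : ℝ) ^ s₂ ≠ 0 := by positivity
  field_simp

/-- Concatenating a prefix of digits of an element of `T` with another element of `T`. -/
lemma concat_mem {p q : ℕ} {ε δ : ℕ → ℝ} (hε : ∀ j, ε j = 0 ∨ ε j = 1)
    (hδ : ∀ j, δ j = 0 ∨ δ j = 1) (n : ℕ) {w : ℝ} (hw : w ∈ T p q) :
    (∑ j ∈ Finset.range n, ((p : ℝ) * ε j + (q : ℝ) * δ j) / 4 ^ (j + 1)) + w / 4 ^ n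
      ∈ T p q := by
  obtain ⟨ζ, η, hζ, hη, rfl⟩ := hw
  refine ⟨fun j => if j < n then ε j else ζ (j - n), fun j => if j < n then δ j else η (j - n),
    fun j => by dsimp only; split <;> [exact hε j; exact hζ _],
    fun j => by dsimp only; split <;> [exact hδ j; exact hη _], ?_⟩
  have hb : Summable fun j : ℕ => ((p : ℝ) * ζ j + (q : ℝ) * η j) / 4 ^ (j + 1) :=
    summable_boolish p q hζ hη
  have := tsum_concat (a := fun j => (p : ℝ) * ε j + (q : ℝ) * δ j)
    (b := fun j => (p : ℝ) * ζ j + (q : ℝ) * η j) hb n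
  rw [← this]
  apply tsum_congr
  intro j
  by_cases h : j < n <;> simp [h]

lemma T_eq_closure_interior {p q : ℕ} (hne : (interior (T p q)).Nonempty) :
    T p q = closure (interior (T p q)) := by
  refine Set.Subset.antisymm ?_ (closure_minimal interior_subset (isClosed_T p q))
  obtain ⟨z, hz⟩ := hne
  intro t ht
  obtain ⟨ε, δ, hε, hδ, rfl⟩ := ht
  rw [Metric.mem_closure_iff]
  intro r hr
  set M : ℝ := (p : ℝ) + q + |z| + 1 with hM
  have hM1 : 0 < M := by positivity
  obtain ⟨n, hn⟩ := exists_pow_lt_of_lt_one (div_pos hr hM1) (show (1 / 4 : ℝ) < 1 by norm_num)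
  set a : ℕ → ℝ := fun j => (p : ℝ) * ε j + (q : ℝ) * δ j with ha
  have hsa : Summable fun j : ℕ => a j / 4 ^ (j + 1) := summable_boolish p q hε hδ
  set Pn : ℝ := ∑ j ∈ Finset.range n, a j / 4 ^ (j + 1) with hPn
  have h4n : (0 : ℝ) < 4 ^ n := by positivity
  -- the candidate point
  set s : ℝ := Pn + ((4 : ℝ) ^ n)⁻¹ * z with hs
  have hsub : ∀ w ∈ T p q, Pn + ((4 : ℝ) ^ n)⁻¹ * w ∈ T p q := by
    intro w hw
    have := concat_mem hε hδ n hw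
    rwa [← inv_mul_eq_div] at this
  have hhomeo : s ∈ interior (T p q) := by
    set h : ℝ ≃ₜ ℝ := (Homeomorph.mulLeft₀ ((4 : ℝ) ^ n)⁻¹ (by positivity)).trans
      (Homeomorph.addLeft Pn) with hh
    have happ : ∀ w : ℝ, h w = Pn + ((4 : ℝ) ^ n)⁻¹ * w := fun w => rfl
    have himg : h '' interior (T p q) ⊆ T p q := by
      rintro - ⟨w, hw, rfl⟩
      rw [happ]
      exact hsub w (interior_subset hw)
    have hsub2 : h '' interior (T p q) ⊆ interior (T p q) :=
      interior_maximal himg (h.isOpenMap _ isOpen_interior)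
    have : s = h z := (happ z).symm
    rw [this]
    exact hsub2 ⟨z, hz, rfl⟩
  refine ⟨s, hhomeo, ?_⟩
  -- distance estimate
  have hsplit := Summable.sum_add_tsum_nat_add (f := fun j : ℕ => a j / 4 ^ (j + 1)) n hsa
  have htail : ∑' i : ℕ, a (i + n) / 4 ^ ((i + n) + 1)
      = (∑' i : ℕ, a (i + n) / 4 ^ (i + 1)) / 4 ^ n := by
    rw [← tsum_div_const]
    apply tsum_congr
    intro i
    rw [div_div, ← pow_add]
    have : i + 1 + n = i + n + 1 := by omega
    rw [this]
  set τ : ℝ := ∑' i : ℕ, a (i + n) / 4 ^ (i + 1) with hτ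
  have ha0 : ∀ j, 0 ≤ a j := by
    intro j
    rcases hε j with h1 | h1 <;> rcases hδ j with h2 | h2 <;> rw [ha] <;> dsimp only <;>
      rw [h1, h2] <;> positivity
  have hτ0 : 0 ≤ τ := tsum_digit_nonneg fun i => ha0 _
  have hτle : τ ≤ (p : ℝ) + q :=
    tsum_digit_le (fun i => ha0 _) fun i => (le_abs_self _).trans (abs_digit_le p q hε hδ _)
  have ht_eq : ∑' j : ℕ, a j / 4 ^ (j + 1) = Pn + τ / 4 ^ n := by
    rw [← hsplit, htail]
  rw [Real.dist_eq, ht_eq]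
  have hdiff : Pn + τ / 4 ^ n - s = (τ - z) / 4 ^ n := by
    rw [hs, inv_mul_eq_div]
    ring
  rw [hdiff, abs_div, abs_of_pos h4n]
  have habs : |τ - z| ≤ M := by
    rw [hM]
    have := abs_sub_abs_le_abs_sub τ z
    have h1 : |τ - z| ≤ |τ| + |z| := abs_sub _ _
    rw [abs_of_nonneg hτ0] at h1
    linarith
  have hq4 : ((1 : ℝ) / 4) ^ n = ((4 : ℝ) ^ n)⁻¹ := by
    rw [one_div, inv_pow]
  rw [hq4] at hn
  have h1 : |τ - z| / 4 ^ n ≤ M / 4 ^ n := by gcongr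
  have h2 : M / 4 ^ n < r := by
    have hlt := mul_lt_mul_of_pos_left hn hM1
    have hMr : M * (r / M) = r := by field_simp
    have hMd : M / 4 ^ n = M * ((4 : ℝ) ^ n)⁻¹ := div_eq_mul_inv _ _
    linarith
  linarith


lemma Eu_eq (p q : ℕ) (hq0 : (q : ℝ) ≠ 0) :
    Eu ((p : ℝ) / q) = (fun t : ℝ => t / q) '' T q p := by
  ext z
  constructor
  · rintro ⟨x, ⟨ε, hε, rfl⟩, y, ⟨δ, hδ, rfl⟩, rfl⟩
    refine ⟨∑' j : ℕ, ((q : ℝ) * ε j + (p : ℝ) * δ j) / 4 ^ (j + 1), ⟨ε, δ, hε, hδ, rfl⟩, ?_⟩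
    rw [tsum_split q p hε hδ]
    field_simp
  · rintro ⟨t, ⟨ε, δ, hε, hδ, rfl⟩, rfl⟩
    refine ⟨∑' j : ℕ, ε j / 4 ^ (j + 1), ⟨ε, hε, rfl⟩,
      ∑' j : ℕ, δ j / 4 ^ (j + 1), ⟨δ, hδ, rfl⟩, ?_⟩
    rw [tsum_split q p hε hδ]
    field_simp


end EuAux


open EuAux in
/-- If `u = p/q` with `p, q` positive coprime integers and `p* + q*` odd, then `E_u`
contains a nonempty open interval and `E_u` is the closure of its interior. -/
theorem Eu_closure_interior_of_odd_sum (p q : ℕ) (hp : 0 < p) (hq : 0 < q)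
    (hpq : Nat.Coprime p q) (hodd : Odd (fstDigit 4 p + fstDigit 4 q)) :
    (∃ a b : ℝ, a < b ∧ Set.Ioo a b ⊆ Eu ((p : ℝ) / q)) ∧
      Eu ((p : ℝ) / q) = closure (interior (Eu ((p : ℝ) / q))) := by
  have hq0 : (q : ℝ) ≠ 0 := Nat.cast_ne_zero.mpr hq.ne'
  have hq0' : (0 : ℝ) < q := by exact_mod_cast hq
  -- 4-adic decomposition
  set va := padicValNat 4 q with hva
  set vb := padicValNat 4 p with hvb
  set q₀ := q / 4 ^ va with hq₀def
  set p₀ := p / 4 ^ vb with hp₀def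
  have hqd : 4 ^ va ∣ q := pow_padicValNat_dvd
  have hpd : 4 ^ vb ∣ p := pow_padicValNat_dvd
  have hq₀ : q = 4 ^ va * q₀ := (Nat.mul_div_cancel' hqd).symm
  have hp₀ : p = 4 ^ vb * p₀ := (Nat.mul_div_cancel' hpd).symm
  have hmax : ∀ m : ℕ, 0 < m → ¬ (4 : ℕ) ∣ (m / 4 ^ padicValNat 4 m) := by
    intro m hm h4
    have hdvd : 4 ^ padicValNat 4 m ∣ m := pow_padicValNat_dvd
    have : 4 ^ (padicValNat 4 m + 1) ∣ m := by
      obtain ⟨t, ht⟩ := h4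
      refine ⟨t, ?_⟩
      calc m = 4 ^ padicValNat 4 m * (m / 4 ^ padicValNat 4 m) :=
            (Nat.mul_div_cancel' hdvd).symm
        _ = 4 ^ padicValNat 4 m * (4 * t) := by rw [ht]
        _ = 4 ^ (padicValNat 4 m + 1) * t := by rw [pow_succ]; ring
    have hle := (Nat.pow_dvd_iff_le_padicValNat (by norm_num) hm.ne').mp this
    omega
  have hq₀0 : q₀ % 4 ≠ 0 := fun h => hmax q hq (Nat.dvd_of_mod_eq_zero h)
  have hp₀0 : p₀ % 4 ≠ 0 := fun h => hmax p hp (Nat.dvd_of_mod_eq_zero h)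
  have hfq : fstDigit 4 q = q₀ % 4 := rfl
  have hfp : fstDigit 4 p = p₀ % 4 := rfl
  have hodd' : (p₀ % 4 + q₀ % 4) % 2 = 1 := by
    have := Nat.odd_iff.mp hodd
    rw [hfp, hfq] at this
    exact this
  have hlt4q : q₀ % 4 < 4 := Nat.mod_lt _ (by norm_num)
  have hlt4p : p₀ % 4 < 4 := Nat.mod_lt _ (by norm_num)
  have hc : Complete4 q₀ p₀ := by
    have hcases : (q₀ % 4 = 2 ∧ (p₀ % 4 = 1 ∨ p₀ % 4 = 3)) ∨
        (p₀ % 4 = 2 ∧ (q₀ % 4 = 1 ∨ q₀ % 4 = 3)) := by omega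
    rcases hcases with ⟨h1, h2⟩ | ⟨h1, h2⟩
    · exact complete4_of _ _ h1 h2
    · exact complete4_swap (complete4_of _ _ h1 h2)
  have hne₀ := interior_nonempty hc
  -- scale into T q p
  set c := min va vb with hcdef
  have hsc : ∀ x ∈ T q₀ p₀, (4 : ℝ) ^ c * x ∈ T q p := by
    intro x hx
    apply scale_mem (s₁ := va - c) (s₂ := vb - c) ?_ ?_ hx
    · have h1 : va - c + c = va := by omega
      rw [h1]
      rw [hq₀]
      push_cast
      ring
    · have h1 : vb - c + c = vb := by omega
      rw [h1]
      rw [hp₀]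
      push_cast
      ring
  have hne : (interior (T q p)).Nonempty := by
    obtain ⟨y, hy⟩ := hne₀
    set h : ℝ ≃ₜ ℝ := Homeomorph.mulLeft₀ ((4 : ℝ) ^ c) (by positivity) with hh
    have himg : h '' interior (T q₀ p₀) ⊆ T q p := by
      rintro - ⟨w, hw, rfl⟩
      exact hsc w (interior_subset hw)
    have hsub2 : h '' interior (T q₀ p₀) ⊆ interior (T q p) :=
      interior_maximal himg (h.isOpenMap _ isOpen_interior)
    exact ⟨h y, hsub2 ⟨y, hy, rfl⟩⟩
  -- homeomorphism t ↦ t / q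
  set g : ℝ ≃ₜ ℝ := Homeomorph.mulLeft₀ ((q : ℝ)⁻¹) (inv_ne_zero hq0) with hg
  have hgfun : (fun t : ℝ => t / q) = ⇑g := by
    funext t
    show t / q = (q : ℝ)⁻¹ * t
    rw [div_eq_inv_mul]
  have hEu : Eu ((p : ℝ) / q) = g '' T q p := by
    rw [Eu_eq p q hq0, hgfun]
  constructor
  · -- interval
    obtain ⟨z, hz⟩ := hne
    obtain ⟨ρ, hρ0, hball⟩ := Metric.isOpen_iff.mp isOpen_interior z hz
    refine ⟨(z - ρ) / q, (z + ρ) / q, ?_, ?_⟩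
    · rw [div_lt_div_iff_of_pos_right hq0']
      linarith
    · intro w hw
      rw [Eu_eq p q hq0]
      refine ⟨(q : ℝ) * w, ?_, by field_simp⟩
      have h1 : z - ρ < (q : ℝ) * w := by
        have := hw.1
        rw [div_lt_iff₀ hq0'] at this
        linarith [this]
      have h2 : (q : ℝ) * w < z + ρ := by
        have := hw.2
        rw [lt_div_iff₀ hq0'] at this
        linarith [this]
      have : (q : ℝ) * w ∈ Metric.ball z ρ := by
        rw [Metric.mem_ball, Real.dist_eq, abs_lt]
        constructor <;> linarith
      exact interior_subset (hball this)
  · have hT := T_eq_closure_interior hne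
    calc Eu ((p : ℝ) / q) = g '' T q p := hEu
      _ = g '' closure (interior (T q p)) := by rw [← hT]
      _ = closure (g '' interior (T q p)) := (Homeomorph.image_closure g _)
      _ = closure (interior (g '' T q p)) := by rw [Homeomorph.image_interior]
      _ = closure (interior (Eu ((p : ℝ) / q))) := by rw [← hEu]
end

section
/- Let u > 0. If the set E_u = E + uE contains a nonempty open interval, then E_u is equal to the closure of its interior. -/
open MeasureTheory

lemma digit_le {c : ℝ} (hc : c = 0 ∨ c = 1) (j : ℕ) : c / 4 ^ (j+1) ≤ (1/4 : ℝ) ^ j := by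
  have h4 : (4:ℝ)^j ≤ 4^(j+1) := pow_le_pow_right₀ (by norm_num) (by omega)
  rcases hc with h | h
  · rw [h, zero_div]; positivity
  · rw [h, div_pow, one_pow, div_le_div_iff₀ (by positivity) (by positivity)]
    linarith

lemma digit_nonneg {c : ℝ} (hc : c = 0 ∨ c = 1) (j : ℕ) : 0 ≤ c / 4 ^ (j+1) := by
  rcases hc with h | h <;> rw [h] <;> positivity

lemma summable_aux (ε : ℕ → ℝ) (hε : ∀ j, ε j = 0 ∨ ε j = 1) :
    Summable (fun j => ε j / 4 ^ (j + 1)) :=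
  Summable.of_nonneg_of_le (fun j => digit_nonneg (hε j) j) (fun j => digit_le (hε j) j)
    (summable_geometric_of_lt_one (by norm_num) (by norm_num))

lemma E_bounds {x : ℝ} (hx : x ∈ E) : 0 ≤ x ∧ x ≤ 4/3 := by
  obtain ⟨ε, hε, rfl⟩ := hx
  constructor
  · exact tsum_nonneg fun j => digit_nonneg (hε j) j
  · have h1 : ∑' j : ℕ, ε j / 4 ^ (j + 1) ≤ ∑' j : ℕ, (1/4 : ℝ)^j :=
      Summable.tsum_le_tsum (fun j => digit_le (hε j) j) (summable_aux ε hε)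
        (summable_geometric_of_lt_one (by norm_num) (by norm_num))
    have h2 : ∑' j : ℕ, (1/4 : ℝ)^j = 4/3 := by
      rw [tsum_geometric_of_lt_one (by norm_num) (by norm_num)]; norm_num
    linarith

def cons (c : ℝ) (ε : ℕ → ℝ) : ℕ → ℝ := fun n => match n with | 0 => c | j+1 => ε j

lemma cons_digits {c : ℝ} {ε : ℕ → ℝ} (hc : c = 0 ∨ c = 1) (hε : ∀ j, ε j = 0 ∨ ε j = 1) :
    ∀ j, cons c ε j = 0 ∨ cons c ε j = 1 := by
  intro j; cases j with
  | zero => exact hc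
  | succ n => exact hε n

lemma shift_sum (ε : ℕ → ℝ) (hε : ∀ j, ε j = 0 ∨ ε j = 1) (c : ℝ) (hc : c = 0 ∨ c = 1) :
    ∑' j : ℕ, cons c ε j / 4 ^ (j + 1) = c / 4 + (∑' j : ℕ, ε j / 4 ^ (j + 1)) / 4 := by
  rw [Summable.tsum_eq_zero_add (summable_aux _ (cons_digits hc hε))]
  have h1 : ∀ b : ℕ, cons c ε (b+1) / 4 ^ (b + 1 + 1) = (ε b / 4 ^ (b+1)) * (1/4) := by
    intro b
    show ε b / 4 ^ (b + 2) = _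
    rw [pow_succ]
    field_simp
  simp only [h1]
  rw [tsum_mul_right]
  show c / 4 ^ (0+1) + _ = _
  ring

lemma E_shift {c x : ℝ} (hc : c = 0 ∨ c = 1) (hx : x ∈ E) : c / 4 + x / 4 ∈ E := by
  obtain ⟨ε, hε, rfl⟩ := hx
  exact ⟨cons c ε, cons_digits hc hε, (shift_sum ε hε c hc).symm⟩

lemma E_split {x : ℝ} (hx : x ∈ E) :
    ∃ c, (c = 0 ∨ c = 1) ∧ ∃ y ∈ E, x = c / 4 + y / 4 := by
  obtain ⟨ε, hε, rfl⟩ := hx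
  refine ⟨ε 0, hε 0, ∑' j : ℕ, ε (j+1) / 4 ^ (j+1), ⟨fun j => ε (j+1), fun j => hε (j+1), rfl⟩, ?_⟩
  rw [← shift_sum (fun j => ε (j+1)) (fun j => hε (j+1)) (ε 0) (hε 0)]
  congr 1
  funext j
  cases j <;> rfl

open Classical in
lemma isCompact_E : IsCompact E := by
  have hdig : ∀ (b : ℕ → Bool) (j : ℕ),
      (if b j then (1:ℝ) else 0) = 0 ∨ (if b j then (1:ℝ) else 0) = 1 := by
    intro b j; by_cases h : b j <;> simp [h]
  have himg : E = (fun b : ℕ → Bool => ∑' j : ℕ, (if b j then (1:ℝ) else 0) / 4 ^ (j+1)) ''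
      Set.univ := by
    ext x
    constructor
    · rintro ⟨ε, hε, rfl⟩
      refine ⟨fun j => decide (ε j = 1), Set.mem_univ _, tsum_congr fun j => ?_⟩
      rcases hε j with h | h <;> simp [h]
    · rintro ⟨b, -, rfl⟩
      exact ⟨fun j => if b j then 1 else 0, hdig b, rfl⟩
  rw [himg]
  apply IsCompact.image isCompact_univ
  apply continuous_tsum (u := fun j => (1/4:ℝ)^j)
  · intro j
    have hc : Continuous (fun v : Bool => (if v then (1:ℝ) else 0) / 4 ^ (j+1)) :=
      continuous_of_discreteTopology
    exact hc.comp (continuous_apply j)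
  · exact summable_geometric_of_lt_one (by norm_num) (by norm_num)
  · intro j b
    rw [Real.norm_eq_abs, abs_of_nonneg (digit_nonneg (hdig b j) j)]
    exact digit_le (hdig b j) j

lemma isClosed_Eu (u : ℝ) : IsClosed (Eu u) := by
  have : Eu u = (fun p : ℝ × ℝ => p.1 + u * p.2) '' (E ×ˢ E) := by
    ext z
    constructor
    · rintro ⟨x, hx, y, hy, rfl⟩; exact ⟨(x, y), ⟨hx, hy⟩, rfl⟩
    · rintro ⟨⟨x, y⟩, ⟨hx, hy⟩, rfl⟩; exact ⟨x, hx, y, hy, rfl⟩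
  rw [this]
  exact ((isCompact_E.prod isCompact_E).image (by continuity)).isClosed

lemma Eu_bounds {u z : ℝ} (hu : 0 < u) (hz : z ∈ Eu u) : 0 ≤ z ∧ z ≤ (1 + u) * (4/3) := by
  obtain ⟨x, hx, y, hy, rfl⟩ := hz
  obtain ⟨hx0, hx1⟩ := E_bounds hx
  obtain ⟨hy0, hy1⟩ := E_bounds hy
  constructor
  · positivity
  · nlinarith

lemma Eu_subdiv {u z : ℝ} (hz : z ∈ Eu u) :
    ∃ a w, w ∈ Eu u ∧ z = a / 4 + w / 4 ∧ ∀ s ∈ Eu u, a / 4 + s / 4 ∈ Eu u := by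
  obtain ⟨x, hx, y, hy, rfl⟩ := hz
  obtain ⟨c, hc, x', hx', hxe⟩ := E_split hx
  obtain ⟨d, hd, y', hy', hye⟩ := E_split hy
  refine ⟨c + u * d, x' + u * y', ⟨x', hx', y', hy', rfl⟩, by rw [hxe, hye]; ring, ?_⟩
  rintro s ⟨p, hp, q, hq, rfl⟩
  exact ⟨c / 4 + p / 4, E_shift hc hp, d / 4 + q / 4, E_shift hd hq, by ring⟩

lemma Eu_approx (u : ℝ) (n : ℕ) {z : ℝ} (hz : z ∈ Eu u) :
    ∃ p t, t ∈ Eu u ∧ z = p + t / 4 ^ n ∧ ∀ s ∈ Eu u, p + s / 4 ^ n ∈ Eu u := by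
  induction n generalizing z with
  | zero => exact ⟨0, z, hz, by simp, fun s hs => by simpa using hs⟩
  | succ n ih =>
    obtain ⟨a, w, hw, hzw, hmap⟩ := Eu_subdiv hz
    obtain ⟨p, t, ht, hwt, hpmap⟩ := ih hw
    refine ⟨a / 4 + p / 4, t, ht, ?_, ?_⟩
    · rw [hzw, hwt, pow_succ]; ring
    · intro s hs
      have h1 : p + s / 4 ^ n ∈ Eu u := hpmap s hs
      have h2 := hmap _ h1
      have : a / 4 + (p + s / 4 ^ n) / 4 = a / 4 + p / 4 + s / 4 ^ (n+1) := by
        rw [pow_succ]; ring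
      rwa [this] at h2

/-- Lemma 2: if `E_u` contains a nonempty open interval, then `E_u` is the closure of
its interior. -/
theorem Eu_eq_closure_interior_of_contains_interval (u : ℝ) (hu : 0 < u)
    (h : ∃ a b : ℝ, a < b ∧ Set.Ioo a b ⊆ Eu u) :
    Eu u = closure (interior (Eu u)) := by
  obtain ⟨a, b, hab, hsub⟩ := h
  apply Set.Subset.antisymm
  · intro z hz
    rw [Metric.mem_closure_iff]
    intro ε hε
    set m := (a + b) / 2 with hm
    set C := (1 + u) * (4/3) + |m| + 1 with hC
    have hCpos : 0 < C := by positivity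
    obtain ⟨n, hn⟩ := pow_unbounded_of_one_lt (C / ε) (by norm_num : (1:ℝ) < 4)
    obtain ⟨p, t, ht, hzt, hmap⟩ := Eu_approx u n hz
    have h4n : (0:ℝ) < 4 ^ n := by positivity
    have ham : a < m := by rw [hm]; linarith
    have hmb : m < b := by rw [hm]; linarith
    refine ⟨p + m / 4 ^ n, ?_, ?_⟩
    · have hIoo : Set.Ioo (p + a / 4 ^ n) (p + b / 4 ^ n) ⊆ Eu u := by
        intro w hw
        have heq : w = p + ((w - p) * 4 ^ n) / 4 ^ n := by field_simp; ring
        rw [heq]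
        refine hmap _ (hsub ⟨?_, ?_⟩)
        · exact (div_lt_iff₀ h4n).mp (by linarith [hw.1])
        · exact (lt_div_iff₀ h4n).mp (by linarith [hw.2])
      exact interior_maximal hIoo isOpen_Ioo
        ⟨by nlinarith [(div_lt_div_iff_of_pos_right h4n).mpr ham],
         by nlinarith [(div_lt_div_iff_of_pos_right h4n).mpr hmb]⟩
    · have hdiff : z - (p + m / 4 ^ n) = (t - m) / 4 ^ n := by rw [hzt]; ring
      rw [Real.dist_eq, hdiff, abs_div, abs_of_pos h4n]
      obtain ⟨ht0, ht1⟩ := Eu_bounds hu ht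
      have habs : |t - m| ≤ (1 + u) * (4/3) + |m| := by
        calc |t - m| ≤ |t| + |m| := abs_sub t m
        _ ≤ (1 + u) * (4/3) + |m| := by rw [abs_of_nonneg ht0]; linarith
      have hCε : C < ε * 4 ^ n := by
        rw [div_lt_iff₀ hε] at hn; linarith
      rw [div_lt_iff₀ h4n]
      calc |t - m| ≤ (1 + u) * (4/3) + |m| := habs
      _ < C := by rw [hC]; linarith
      _ < ε * 4 ^ n := hCε
  · calc closure (interior (Eu u)) ⊆ closure (Eu u) := closure_mono interior_subset
    _ = Eu u := (isClosed_Eu u).closure_eq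
end

section
/- The set B = {(1−h)·z + h·z' : z ∈ E, z' ∈ 2E + i, 0 ≤ h ≤ 1} ⊆ ℂ, the union of all line segments joining a point of E to a point of 2E + i, has two-dimensional Lebesgue measure zero. -/
set_option maxHeartbeats 1000000

open MeasureTheory Pointwise
open scoped ENNReal

/-- `B`: the union of all segments joining a point of `E` (on the real axis) to a
point of `2E + i`. -/
def B : Set ℂ :=
  {w | ∃ x ∈ E, ∃ y ∈ E, ∃ h ∈ Set.Icc (0 : ℝ) 1,
    w = (1 - h) * (x : ℂ) + h * (2 * (y : ℂ) + Complex.I)}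

namespace BES


lemma summable_geom4 : Summable (fun j : ℕ => ((1:ℝ)/4) ^ (j+1)) := by
  apply Summable.comp_injective (summable_geometric_of_lt_one (by norm_num) (by norm_num))
    (add_left_injective 1)

lemma geom4_sum (n : ℕ) : ∑ j ∈ Finset.range n, ((1:ℝ)/4) ^ (j+1) = (1 - (1/4)^n)/3 := by
  induction n with
  | zero => simp
  | succ n ih => rw [Finset.sum_range_succ, ih]; ring

lemma summable_digits (c : ℕ → ℝ) (hc : ∀ j, |c j| ≤ 1) :
    Summable (fun j => c j / 4 ^ (j+1)) := by
  apply Summable.of_norm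
  apply Summable.of_nonneg_of_le (fun j => norm_nonneg _) (fun j => ?_) summable_geom4
  rw [Real.norm_eq_abs, abs_div, abs_pow]
  rw [show |(4:ℝ)| = 4 by norm_num]
  rw [div_le_iff₀ (by positivity)]
  calc |c j| ≤ 1 := hc j
    _ ≤ (1/4)^(j+1) * 4^(j+1) := by rw [div_pow, div_mul_cancel₀]; norm_num; positivity

lemma digit_abs_le (ε : ℕ → ℝ) (hε : ∀ j, ε j = 0 ∨ ε j = 1) (j : ℕ) : |ε j| ≤ 1 := by
  rcases hε j with h | h <;> rw [h] <;> norm_num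

/-- sum bound: `|∑_{j<n} c j / 4^(j+1)| ≤ 1/3` when `|c j| ≤ 1`. -/
lemma sum_digits_le (c : ℕ → ℝ) (hc : ∀ j, |c j| ≤ 1) (n : ℕ) :
    |∑ j ∈ Finset.range n, c j / 4 ^ (j+1)| ≤ 1/3 := by
  calc |∑ j ∈ Finset.range n, c j / 4 ^ (j+1)|
      ≤ ∑ j ∈ Finset.range n, |c j / 4 ^ (j+1)| := Finset.abs_sum_le_sum_abs _ _
    _ ≤ ∑ j ∈ Finset.range n, (1/4:ℝ)^(j+1) := by
        apply Finset.sum_le_sum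
        intro j _
        rw [abs_div, abs_pow, show |(4:ℝ)| = 4 by norm_num, div_pow, one_pow]
        apply div_le_div_of_nonneg_right ?_ (by positivity)
        · simpa using hc j
    _ = (1 - (1/4)^n)/3 := geom4_sum n
    _ ≤ 1/3 := by
        have : (0:ℝ) ≤ (1/4)^n := by positivity
        linarith



lemma summable_digits01 (ε : ℕ → ℝ) (hε : ∀ j, ε j = 0 ∨ ε j = 1) :
    Summable (fun j => ε j / 4 ^ (j+1)) :=
  summable_digits ε (digit_abs_le ε hε)


lemma tsum_shift (c : ℕ → ℝ) (hc : Summable (fun j => c j / 4 ^ (j+1))) :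
    ∑' j : ℕ, c j / 4 ^ (j + 1 + 1) = (∑' j : ℕ, c j / 4 ^ (j+1)) / 4 := by
  rw [← tsum_div_const]
  congr 1 with j
  rw [div_div, ← pow_succ]

lemma sum_shift (c : ℕ → ℝ) (n : ℕ) :
    ∑ j ∈ Finset.range n, c j / 4 ^ (j + 1 + 1)
      = (∑ j ∈ Finset.range n, c j / 4 ^ (j+1)) / 4 := by
  rw [Finset.sum_div]
  apply Finset.sum_congr rfl
  intro j _
  rw [div_div, ← pow_succ]

/-- shift lemma -/
lemma E_shift {x : ℝ} :
    x ∈ E ↔ ∃ e : ℝ, (e = 0 ∨ e = 1) ∧ ∃ y ∈ E, x = e / 4 + y / 4 := by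
  constructor
  · rintro ⟨ε, hε, rfl⟩
    refine ⟨ε 0, hε 0, ∑' j : ℕ, ε (j+1) / 4 ^ (j+1), ⟨fun j => ε (j+1), fun j => hε _, rfl⟩, ?_⟩
    rw [Summable.tsum_eq_zero_add (summable_digits01 ε hε),
      tsum_shift (fun j => ε (j+1)) (summable_digits01 _ (fun j => hε _))]
    norm_num
  · rintro ⟨e, he, y, ⟨δ, hδ, rfl⟩, rfl⟩
    set ε : ℕ → ℝ := fun n => Nat.rec e (fun k _ => δ k) n with hεdef
    have hε : ∀ j, ε j = 0 ∨ ε j = 1 := by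
      intro j; cases j with
      | zero => exact he
      | succ k => exact hδ k
    refine ⟨ε, hε, ?_⟩
    have h0 : ε 0 = e := rfl
    have hs : ∀ j, ε (j+1) = δ j := fun j => rfl
    rw [show (∑' j : ℕ, ε j / 4 ^ (j+1)) = ε 0 / 4 ^ (0+1) + ∑' j : ℕ, ε (j+1) / 4 ^ (j+1+1) from
      Summable.tsum_eq_zero_add (summable_digits01 ε hε),
      tsum_shift (fun j => ε (j+1)) (by
        apply summable_digits01; intro j; rw [hs]; exact hδ j)]
    simp only [hs, h0]
    norm_num

/-- level-n decomposition of E -/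
lemma E_level (n : ℕ) {x : ℝ} :
    x ∈ E ↔ ∃ ε : ℕ → ℝ, (∀ j, ε j = 0 ∨ ε j = 1) ∧ ∃ y ∈ E,
      x = (∑ j ∈ Finset.range n, ε j / 4 ^ (j+1)) + y / 4 ^ n := by
  induction n generalizing x with
  | zero =>
    constructor
    · intro hx; exact ⟨fun _ => 0, fun _ => Or.inl rfl, x, hx, by simp⟩
    · rintro ⟨ε, hε, y, hy, rfl⟩; simpa using hy
  | succ n ih =>
    rw [E_shift]
    constructor
    · rintro ⟨e, he, y, hy, rfl⟩
      rw [ih] at hy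
      obtain ⟨ε, hε, z, hz, rfl⟩ := hy
      set ε' : ℕ → ℝ := fun j => Nat.rec e (fun k _ => ε k) j with hε'def
      have hε' : ∀ j, ε' j = 0 ∨ ε' j = 1 := by
        intro j; cases j with
        | zero => exact he
        | succ k => exact hε k
      refine ⟨ε', hε', z, hz, ?_⟩
      have h0 : ε' 0 = e := rfl
      have hs : ∀ j, ε' (j+1) = ε j := fun j => rfl
      rw [Finset.sum_range_succ']
      simp only [hs, h0]
      rw [sum_shift]
      rw [pow_succ]
      field_simp
      ring
    · rintro ⟨ε, hε, y, hy, rfl⟩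
      refine ⟨ε 0, hε 0, (∑ j ∈ Finset.range n, ε (j+1) / 4 ^ (j+1)) + y / 4 ^ n,
        ih.2 ⟨fun j => ε (j+1), fun j => hε _, y, hy, rfl⟩, ?_⟩
      rw [Finset.sum_range_succ']
      rw [sum_shift]
      rw [pow_succ]
      field_simp
      ring


/-- E as image of the compact digit space -/
lemma E_eq_image : E = (fun ε : ℕ → ℝ => ∑' j : ℕ, ε j / 4 ^ (j+1)) ''
    (Set.univ.pi (fun _ : ℕ => ({0,1} : Set ℝ))) := by
  ext x
  simp only [E, Set.mem_setOf_eq, Set.mem_image, Set.mem_pi, Set.mem_univ, forall_true_left,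
    Set.mem_insert_iff, Set.mem_singleton_iff]
  constructor
  · rintro ⟨ε, hε, rfl⟩; exact ⟨ε, fun j => hε j, rfl⟩
  · rintro ⟨ε, hε, rfl⟩; exact ⟨ε, fun j => hε j, rfl⟩

lemma E_isCompact : IsCompact E := by
  rw [E_eq_image]
  apply IsCompact.image_of_continuousOn
  · exact isCompact_univ_pi (fun i => ((Set.finite_singleton (1:ℝ)).insert 0).isCompact)
  · rw [continuousOn_iff_continuous_restrict]
    apply continuous_tsum (u := fun j : ℕ => ((1:ℝ)/4)^(j+1))
    · intro j
      exact (continuous_apply j).comp continuous_subtype_val |>.div_const _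
    · exact summable_geom4
    · rintro j ⟨ε, hε⟩
      simp only [Set.mem_pi, Set.mem_univ, forall_true_left] at hε
      have h1 : |ε j| ≤ 1 := by
        rcases hε j with h | h
        · simp [h]
        · simp only [Set.mem_singleton_iff] at h; simp [h]
      rw [Real.norm_eq_abs, abs_div, abs_pow, show |(4:ℝ)| = 4 by norm_num, div_pow, one_pow]
      rw [div_le_div_iff₀ (by positivity) (by positivity)]
      calc |ε j| * 4^(j+1) ≤ 1 * 4^(j+1) := by
            apply mul_le_mul_of_nonneg_right h1 (by positivity)
        _ = 4^(j+1) := by ring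
        _ = 1 * 4 ^ (j+1) := by ring

/-- The slice set at height h -/
def K (h : ℝ) : Set ℝ := (fun p : ℝ × ℝ => (1-h) * p.1 + 2*h*p.2) '' (E ×ˢ E)

lemma K_isCompact (h : ℝ) : IsCompact (K h) :=
  ((E_isCompact.prod E_isCompact).image (by fun_prop))

lemma B_isCompact : IsCompact B := by
  have : B = (fun p : (ℝ × ℝ) × ℝ =>
      (1 - p.2) * (p.1.1 : ℂ) + p.2 * (2 * (p.1.2:ℂ) + Complex.I)) ''
      ((E ×ˢ E) ×ˢ Set.Icc (0:ℝ) 1) := by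
    ext w
    simp only [B, Set.mem_setOf_eq, Set.mem_image, Set.mem_prod, Prod.exists]
    constructor
    · rintro ⟨x, hx, y, hy, h, hh, rfl⟩
      exact ⟨x, y, h, ⟨⟨hx, hy⟩, hh⟩, rfl⟩
    · rintro ⟨x, y, h, ⟨⟨hx, hy⟩, hh⟩, rfl⟩
      exact ⟨x, hx, y, hy, h, hh, rfl⟩
  rw [this]
  apply IsCompact.image
  · exact (E_isCompact.prod E_isCompact).prod isCompact_Icc
  · fun_prop


noncomputable def dg {n : ℕ} (σ : Fin n → Bool) (j : ℕ) : ℝ :=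
  if hj : j < n then (if σ ⟨j, hj⟩ then 1 else 0) else 0

lemma dg_mem {n : ℕ} (σ : Fin n → Bool) (j : ℕ) : dg σ j = 0 ∨ dg σ j = 1 := by
  unfold dg
  split
  · split
    · right; rfl
    · left; rfl
  · left; rfl

noncomputable def SS (h : ℝ) {n : ℕ} (p : (Fin n → Bool) × (Fin n → Bool)) : ℝ :=
  ∑ j ∈ Finset.range n, ((1-h) * dg p.1 j + 2*h* dg p.2 j) / 4 ^ (j+1)

lemma comb (h : ℝ) (n : ℕ) (e d : ℕ → ℝ) (x y : ℝ) :
    (1-h) * ((∑ j ∈ Finset.range n, e j / 4^(j+1)) + x/4^n)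
      + 2*h*((∑ j ∈ Finset.range n, d j / 4^(j+1)) + y/4^n)
    = (∑ j ∈ Finset.range n, ((1-h)* e j + 2*h* d j)/4^(j+1)) + ((1-h)*x + 2*h*y)/4^n := by
  have hsum : (1-h) * (∑ j ∈ Finset.range n, e j / 4^(j+1))
      + 2*h*(∑ j ∈ Finset.range n, d j / 4^(j+1))
      = ∑ j ∈ Finset.range n, ((1-h)* e j + 2*h* d j)/4^(j+1) := by
    rw [Finset.mul_sum, Finset.mul_sum, ← Finset.sum_add_distrib]
    apply Finset.sum_congr rfl
    intro j _
    ring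
  have expand : (1-h) * ((∑ j ∈ Finset.range n, e j / 4^(j+1)) + x/4^n)
      + 2*h*((∑ j ∈ Finset.range n, d j / 4^(j+1)) + y/4^n)
      = ((1-h) * (∑ j ∈ Finset.range n, e j / 4^(j+1))
        + 2*h*(∑ j ∈ Finset.range n, d j / 4^(j+1))) + ((1-h)*x + 2*h*y)/4^n := by
    ring
  rw [expand, hsum]

lemma K_decomp (h : ℝ) (n : ℕ) :
    K h = ⋃ p : (Fin n → Bool) × (Fin n → Bool),
      (fun z => SS h p + z / 4^n) '' K h := by
  classical
  ext u
  constructor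
  · rintro ⟨⟨x, y⟩, ⟨hx, hy⟩, rfl⟩
    dsimp only at hx hy
    obtain ⟨ε, hε, x', hx', hxe⟩ := (E_level n).1 hx
    obtain ⟨δ, hδ, y', hy', hye⟩ := (E_level n).1 hy
    simp only [Set.mem_iUnion]
    refine ⟨(fun j => decide (ε (j:ℕ) = 1), fun j => decide (δ (j:ℕ) = 1)), ?_⟩
    refine ⟨(1-h)*x' + 2*h*y', ⟨⟨x', y'⟩, ⟨hx', hy'⟩, rfl⟩, ?_⟩
    have hdg1 : ∀ j ∈ Finset.range n, dg (fun j : Fin n => decide (ε (j:ℕ) = 1)) j = ε j := by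
      intro j hj
      rw [Finset.mem_range] at hj
      unfold dg
      rw [dif_pos hj]
      rcases hε j with h0 | h1
      · rw [if_neg (by simp [h0]), h0]
      · rw [if_pos (by simp [h1]), h1]
    have hdg2 : ∀ j ∈ Finset.range n, dg (fun j : Fin n => decide (δ (j:ℕ) = 1)) j = δ j := by
      intro j hj
      rw [Finset.mem_range] at hj
      unfold dg
      rw [dif_pos hj]
      rcases hδ j with h0 | h1
      · rw [if_neg (by simp [h0]), h0]
      · rw [if_pos (by simp [h1]), h1]
    simp only
    rw [hxe, hye, comb, SS]
    congr 1
    apply Finset.sum_congr rfl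
    intro j hj
    rw [hdg1 j hj, hdg2 j hj]
  · intro hu
    simp only [Set.mem_iUnion] at hu
    obtain ⟨p, z, ⟨⟨x, y⟩, ⟨hx, hy⟩, rfl⟩, rfl⟩ := hu
    have hX : (∑ j ∈ Finset.range n, dg p.1 j / 4^(j+1)) + x/4^n ∈ E :=
      (E_level n).2 ⟨dg p.1, dg_mem p.1, x, hx, rfl⟩
    have hY : (∑ j ∈ Finset.range n, dg p.2 j / 4^(j+1)) + y/4^n ∈ E :=
      (E_level n).2 ⟨dg p.2, dg_mem p.2, y, hy, rfl⟩
    refine ⟨⟨_, _⟩, ⟨hX, hY⟩, ?_⟩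
    simp only
    rw [comb, SS]

lemma piece_meas (S r : ℝ) (s : Set ℝ) :
    volume ((fun z => S + z * r) '' s) = ENNReal.ofReal |r| * volume s := by
  have him : (fun z => S + z * r) '' s = S +ᵥ (r • s) := by
    ext w
    simp only [Set.mem_image, Set.mem_vadd_set, Set.mem_smul_set]
    constructor
    · rintro ⟨z, hz, rfl⟩; exact ⟨r * z, ⟨z, hz, rfl⟩, by simp [vadd_eq_add]; ring⟩
    · rintro ⟨_, ⟨z, hz, rfl⟩, rfl⟩; exact ⟨z, hz, by simp [vadd_eq_add]; ring⟩
  rw [him, measure_vadd, Measure.addHaar_smul]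
  norm_num


noncomputable def sVal (t : ℝ) (a b : ℕ → ℤ) (n : ℕ) : ℝ :=
  ∑ j ∈ Finset.range n, ((a j : ℝ) + (b j : ℝ) * t) / 4 ^ (j+1)

def SepT (η t : ℝ) : Prop :=
  ∀ n, 1 ≤ n → ∀ a b : ℕ → ℤ, (∀ j, |a j| ≤ 1) → (∀ j, |b j| ≤ 1) →
    (∃ j, j < n ∧ (a j ≠ 0 ∨ b j ≠ 0)) →
    η * (4:ℝ)⁻¹ ^ n < |sVal t a b n|

lemma int_cases {z : ℤ} (hz : |z| ≤ 1) : z = -1 ∨ z = 0 ∨ z = 1 := by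
  rcases abs_le.mp hz with ⟨h1, h2⟩; omega

lemma dg_decide_diff {n : ℕ} (c : ℕ → ℤ) (hc : ∀ j, |c j| ≤ 1) (j : ℕ) (hj : j < n) :
    dg (fun i : Fin n => decide (c (i:ℕ) = 1)) j
      - dg (fun i : Fin n => decide (c (i:ℕ) = -1)) j = (c j : ℝ) := by
  unfold dg
  rw [dif_pos hj, dif_pos hj]
  rcases int_cases (hc j) with h | h | h <;> simp [h]

/-- difference of the two translation parameters equals `(1-h) * sVal t a b n` -/
lemma SS_diff (h : ℝ) (h1 : h ≠ 1) (n : ℕ) (a b : ℕ → ℤ)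
    (ha : ∀ j, |a j| ≤ 1) (hb : ∀ j, |b j| ≤ 1) :
    SS h (fun i : Fin n => decide (a (i:ℕ) = 1), fun i : Fin n => decide (b (i:ℕ) = 1))
      - SS h (fun i : Fin n => decide (a (i:ℕ) = -1), fun i : Fin n => decide (b (i:ℕ) = -1))
    = (1-h) * sVal (2*h/(1-h)) a b n := by
  unfold SS sVal
  rw [← Finset.sum_sub_distrib, Finset.mul_sum]
  apply Finset.sum_congr rfl
  intro j hj
  rw [Finset.mem_range] at hj
  have hda := dg_decide_diff a ha j hj
  have hdb := dg_decide_diff b hb j hj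
  have h1' : (1:ℝ) - h ≠ 0 := by intro hc; apply h1; linarith
  rw [div_sub_div_same]
  have hX : ((1 - h) * dg (fun i : Fin n => decide (a (i:ℕ) = 1)) j
        + 2 * h * dg (fun i : Fin n => decide (b (i:ℕ) = 1)) j)
      - ((1 - h) * dg (fun i : Fin n => decide (a (i:ℕ) = -1)) j
        + 2 * h * dg (fun i : Fin n => decide (b (i:ℕ) = -1)) j)
      = (1-h) * (a j : ℝ) + 2*h*(b j : ℝ) := by
    linear_combination (1-h) * hda + 2*h*hdb
  rw [hX, mul_div_assoc]
  congr 1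
  field_simp



namespace SEP

lemma vadd_meas {d : ℝ} {s : Set ℝ} (hs : IsCompact s) : MeasurableSet (d +ᵥ s) := by
  rw [← Set.image_vadd]
  exact ((hs.image (continuous_const.add continuous_id)).isClosed).measurableSet

end SEP

lemma sep_of_pos {h : ℝ} (h0 : 0 < h) (h1 : h < 1) (hKpos : volume (K h) ≠ 0) :
    ∃ η, 0 < η ∧ η ≤ 1 ∧ SepT η (2*h/(1-h)) := by
  classical
  have hKc : IsCompact (K h) := K_isCompact h
  have hKfin : volume (K h) ≠ ⊤ := hKc.measure_lt_top.ne
  obtain ⟨U, hKU, hUopen, hUlt⟩ := Set.exists_isOpen_lt_of_lt (K h)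
    (volume (K h) + volume (K h)) (ENNReal.lt_add_right hKfin hKpos)
  obtain ⟨δ₀, hδ₀, hthick⟩ := hKc.exists_thickening_subset_open hUopen hKU
  -- translation overlap
  have overlap : ∀ d : ℝ, |d| < δ₀ → volume (K h ∩ (d +ᵥ K h)) ≠ 0 := by
    intro d hd hcontra
    have hsub : K h ∪ (d +ᵥ K h) ⊆ U := by
      apply Set.union_subset hKU
      intro z hz
      rw [Set.mem_vadd_set] at hz
      obtain ⟨x, hx, rfl⟩ := hz
      apply hthick
      rw [Metric.mem_thickening_iff]
      refine ⟨x, hx, ?_⟩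
      rw [vadd_eq_add, Real.dist_eq]
      simpa using hd
    have hmeas : MeasurableSet (d +ᵥ K h) := SEP.vadd_meas hKc
    have hkey := measure_union_add_inter (μ := volume) (K h) hmeas
    rw [hcontra, add_zero, measure_vadd] at hkey
    have : volume (K h) + volume (K h) ≤ volume U := hkey ▸ measure_mono hsub
    exact absurd (lt_of_le_of_lt this hUlt) (lt_irrefl _)
  refine ⟨min (δ₀/2) 1, by positivity, min_le_right _ _, ?_⟩
  intro n hn a b ha hb ⟨j0, hj0n, hj0⟩
  set ι := (Fin n → Bool) × (Fin n → Bool)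
  set A : ι → Set ℝ := fun v => (fun z => SS h v + z / 4^n) '' K h with hA
  have hdecomp : K h = ⋃ v, A v := K_decomp h n
  -- measure of each piece
  have hprep : ∀ v : ι, A v = (fun z => SS h v + z * ((4:ℝ)^n)⁻¹) '' K h := by
    intro v
    apply Set.image_congr'
    intro z
    rw [div_eq_mul_inv]
  have hofr : ENNReal.ofReal |((4:ℝ)^n)⁻¹| = ((4:ℝ≥0∞)^n)⁻¹ := by
    rw [abs_of_pos (by positivity), ENNReal.ofReal_inv_of_pos (by positivity),
      ENNReal.ofReal_pow (by norm_num)]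
    norm_num
  have hAmeas : ∀ v : ι, volume (A v) = ((4:ℝ≥0∞)^n)⁻¹ * volume (K h) := by
    intro v
    rw [hprep v, piece_meas, hofr]
  have hcard : (Fintype.card ι : ℝ≥0∞) = 4^n := by
    have : Fintype.card ι = 2^n * 2^n := by
      simp [ι, Fintype.card_prod, Fintype.card_fun]
    rw [this]
    push_cast
    rw [← mul_pow]
    norm_num
  have hsum : ∑ v : ι, volume (A v) = volume (K h) := by
    rw [Finset.sum_congr rfl (fun v _ => hAmeas v), Finset.sum_const, Finset.card_univ,
      nsmul_eq_mul, hcard, ← mul_assoc, ENNReal.mul_inv_cancel (by positivity)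
      (by exact ENNReal.pow_ne_top (by norm_num)), one_mul]
  -- pairwise null intersections
  have hpairnull : ∀ v w : ι, v ≠ w → volume (A v ∩ A w) = 0 := by
    intro v w hvw
    by_contra hne
    have hcover : ⋃ u, A u ⊆ (A v ∪ A w) ∪ ⋃ u ∈ (Finset.univ.erase v).erase w, A u := by
      intro z hz
      rw [Set.mem_iUnion] at hz
      obtain ⟨u, hu⟩ := hz
      by_cases huv : u = v
      · exact Or.inl (Or.inl (huv ▸ hu))
      by_cases huw : u = w
      · exact Or.inl (Or.inr (huw ▸ hu))
      · right
        exact Set.mem_biUnion (Finset.mem_erase.2 ⟨huw, Finset.mem_erase.2 ⟨huv, Finset.mem_univ u⟩⟩) hu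
    have hAwmeas : MeasurableSet (A w) := by
      rw [hprep w]
      exact ((hKc.image (by fun_prop)).isClosed).measurableSet
    have step : volume (K h) + volume (A v ∩ A w) ≤ volume (K h) := by
      calc volume (K h) + volume (A v ∩ A w)
          = volume (⋃ u, A u) + volume (A v ∩ A w) := by rw [← hdecomp]
        _ ≤ (volume (A v ∪ A w) + volume (⋃ u ∈ (Finset.univ.erase v).erase w, A u))
              + volume (A v ∩ A w) := by
            gcongr
            exact (measure_mono hcover).trans (measure_union_le _ _)
        _ ≤ (volume (A v ∪ A w) + ∑ u ∈ (Finset.univ.erase v).erase w, volume (A u))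
              + volume (A v ∩ A w) := by
            gcongr
            exact measure_biUnion_finset_le _ _
        _ = (volume (A v ∪ A w) + volume (A v ∩ A w))
              + ∑ u ∈ (Finset.univ.erase v).erase w, volume (A u) := by ring
        _ = (volume (A v) + volume (A w))
              + ∑ u ∈ (Finset.univ.erase v).erase w, volume (A u) := by
            rw [measure_union_add_inter _ hAwmeas]
        _ = volume (A v) + (volume (A w) + ∑ u ∈ (Finset.univ.erase v).erase w, volume (A u)) := by
            ring
        _ = ∑ u : ι, volume (A u) := by
            rw [← Finset.add_sum_erase _ (fun u => volume (A u)) (Finset.mem_univ v),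
              ← Finset.add_sum_erase _ (fun u => volume (A u))
                (Finset.mem_erase.2 ⟨Ne.symm hvw, Finset.mem_univ w⟩)]
        _ = volume (K h) := hsum
    have : volume (K h) < volume (K h) + volume (A v ∩ A w) :=
      ENNReal.lt_add_right hKfin hne
    exact absurd (lt_of_lt_of_le this step) (lt_irrefl _)
  -- intersection as image of translated intersection
  have hAint : ∀ v w : ι, A v ∩ A w
      = (fun z => SS h v + z / 4^n) '' (K h ∩ (((SS h w - SS h v) * 4^n) +ᵥ K h)) := by
    intro v w
    have h4 : (4:ℝ)^n ≠ 0 := by positivity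
    ext u
    constructor
    · rintro ⟨⟨z, hz, rfl⟩, hzw⟩
      obtain ⟨z', hz', hzz⟩ := hzw
      refine ⟨z, ⟨hz, ?_⟩, rfl⟩
      rw [Set.mem_vadd_set]
      refine ⟨z', hz', ?_⟩
      rw [vadd_eq_add]
      simp only at hzz
      field_simp at hzz ⊢
      linarith
    · rintro ⟨z, ⟨hz, hz2⟩, rfl⟩
      rw [Set.mem_vadd_set] at hz2
      obtain ⟨z', hz', hzz⟩ := hz2
      rw [vadd_eq_add] at hzz
      refine ⟨⟨z, hz, rfl⟩, ⟨z', hz', ?_⟩⟩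
      simp only
      field_simp
      linarith
  -- conclusion: separation
  set p : ι := (fun i : Fin n => decide (a (i:ℕ) = 1), fun i : Fin n => decide (b (i:ℕ) = 1))
    with hp
  set q : ι := (fun i : Fin n => decide (a (i:ℕ) = -1), fun i : Fin n => decide (b (i:ℕ) = -1))
    with hq
  have hpq : p ≠ q := by
    intro heq
    have h1' := congrFun (congrArg Prod.fst heq) ⟨j0, hj0n⟩
    have h2' := congrFun (congrArg Prod.snd heq) ⟨j0, hj0n⟩
    simp only [hp, hq, decide_eq_decide] at h1' h2'
    rcases hj0 with hja | hjb
    · rcases int_cases (ha j0) with hc | hc | hc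
      · rw [hc] at h1'; simp at h1'
      · exact hja hc
      · rw [hc] at h1'; simp at h1'
    · rcases int_cases (hb j0) with hc | hc | hc
      · rw [hc] at h2'; simp at h2'
      · exact hjb hc
      · rw [hc] at h2'; simp at h2'
  have hnull := hpairnull p q hpq
  rw [hAint p q] at hnull
  have hKnull : volume (K h ∩ (((SS h q - SS h p) * 4^n) +ᵥ K h)) = 0 := by
    have := hnull
    rw [show (fun z => SS h p + z / 4^n) = (fun z => SS h p + z * ((4:ℝ)^n)⁻¹) from
      funext (fun z => by rw [div_eq_mul_inv]), piece_meas] at this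
    rcases mul_eq_zero.mp this with hl | hr
    · exfalso
      rw [hofr] at hl
      exact absurd hl (by simp [ENNReal.pow_ne_top])
    · exact hr
  have hfar : δ₀ ≤ |(SS h q - SS h p) * 4^n| := by
    by_contra hlt
    push_neg at hlt
    exact overlap _ hlt hKnull
  -- algebra to finish
  have hSd : SS h p - SS h q = (1-h) * sVal (2*h/(1-h)) a b n := SS_diff h h1.ne n a b ha hb
  have habs : |(SS h q - SS h p) * 4^n| = (1-h) * |sVal (2*h/(1-h)) a b n| * 4^n := by
    rw [abs_mul, abs_of_pos (show (0:ℝ) < 4^n by positivity), abs_sub_comm, hSd, abs_mul,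
      abs_of_pos (by linarith : (0:ℝ) < 1 - h)]
  rw [habs] at hfar
  have hs_nonneg : 0 ≤ |sVal (2*h/(1-h)) a b n| := abs_nonneg _
  have h4pos : (0:ℝ) < 4^n := by positivity
  have hstep : δ₀ ≤ |sVal (2*h/(1-h)) a b n| * 4^n := by
    have : (1-h) * |sVal (2*h/(1-h)) a b n| * 4^n ≤ |sVal (2*h/(1-h)) a b n| * 4^n := by
      have h1h : (1:ℝ) - h ≤ 1 := by linarith
      nlinarith
    linarith
  have hineq : min (δ₀/2) 1 * (4:ℝ)⁻¹^n < |sVal (2*h/(1-h)) a b n| := by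
    have hmin : min (δ₀/2) 1 ≤ δ₀/2 := min_le_left _ _
    have hinv : (4:ℝ)⁻¹^n = ((4:ℝ)^n)⁻¹ := by rw [inv_pow]
    rw [hinv]
    rw [lt_iff_le_and_ne]
    constructor
    · rw [← div_le_iff₀ h4pos] at hstep
      calc min (δ₀/2) 1 * ((4:ℝ)^n)⁻¹ ≤ δ₀/2 * ((4:ℝ)^n)⁻¹ := by
            apply mul_le_mul_of_nonneg_right hmin (by positivity)
        _ ≤ δ₀ * ((4:ℝ)^n)⁻¹ := by
            have hinv2 : (0:ℝ) ≤ ((4:ℝ)^n)⁻¹ := by positivity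
            nlinarith
        _ = δ₀ / 4^n := by rw [div_eq_mul_inv]
        _ ≤ |sVal (2*h/(1-h)) a b n| := hstep
    · intro heq
      have hlt2 : min (δ₀/2) 1 * ((4:ℝ)^n)⁻¹ < δ₀ * ((4:ℝ)^n)⁻¹ := by
        apply mul_lt_mul_of_pos_right ?_ (by positivity)
        calc min (δ₀/2) 1 ≤ δ₀/2 := hmin
          _ < δ₀ := by linarith
      rw [heq] at hlt2
      rw [← div_eq_mul_inv, lt_div_iff₀ h4pos] at hlt2
      linarith
  exact hineq



/-! ### The greedy construction -/

noncomputable def stepA (t x : ℝ) : (ℤ × ℤ) × ℝ :=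
  let b : ℤ := if 0 ≤ x then -1 else 1
  let z : ℝ := 4*x + (b:ℝ)*t
  let a : ℤ := if (t+1)/3 < z then -1 else if z < -((t+1)/3) then 1 else 0
  ((a, b), z + (a:ℝ))

noncomputable def stepB (t x : ℝ) : (ℤ × ℤ) × ℝ :=
  let b : ℤ := if 2 < 4*x then -1 else if 4*x < -2 then 1 else 0
  let z : ℝ := 4*x + (b:ℝ)*t
  let a : ℤ := if 1 < z then -1 else if z < -1 then 1 else 0
  ((a, b), z + (a:ℝ))

noncomputable def gr (t : ℝ) : ℕ → (ℤ × ℤ) × ℝ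
  | 0 => if t ≤ 2 then ((1,-1), 1-t) else ((1,0),1)
  | 1 => if t ≤ 2 then stepA t (gr t 0).2 else ((-1,-1), 3-t)
  | (i+2) => if t ≤ 2 then stepA t (gr t (i+1)).2 else stepB t (gr t (i+1)).2

lemma gr_zero (t : ℝ) : gr t 0 = if t ≤ 2 then ((1,-1), 1-t) else ((1,0),1) := rfl
lemma gr_one (t : ℝ) : gr t 1 = if t ≤ 2 then stepA t (gr t 0).2 else ((-1,-1), 3-t) := rfl
lemma gr_two (t : ℝ) (i : ℕ) :
    gr t (i+2) = if t ≤ 2 then stepA t (gr t (i+1)).2 else stepB t (gr t (i+1)).2 := rfl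

lemma stepA_digits (t x : ℝ) : |(stepA t x).1.1| ≤ 1 ∧ |(stepA t x).1.2| ≤ 1 := by
  unfold stepA
  dsimp only
  constructor <;> split_ifs <;> norm_num

lemma stepB_digits (t x : ℝ) : |(stepB t x).1.1| ≤ 1 ∧ |(stepB t x).1.2| ≤ 1 := by
  unfold stepB
  dsimp only
  constructor <;> split_ifs <;> norm_num

lemma gr_digits (t : ℝ) (i : ℕ) : |(gr t i).1.1| ≤ 1 ∧ |(gr t i).1.2| ≤ 1 := by
  match i with
  | 0 => unfold gr; split_ifs <;> norm_num
  | 1 =>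
    unfold gr; split_ifs
    · exact stepA_digits _ _
    · norm_num
  | (i+2) =>
    unfold gr; split_ifs
    · exact stepA_digits _ _
    · exact stepB_digits _ _

lemma gr_a0 (t : ℝ) : (gr t 0).1.1 = 1 := by
  unfold gr; split_ifs <;> rfl

lemma stepA_inv {t x : ℝ} (h1 : 1 ≤ t) (h2 : t ≤ 2) (hx : |x| ≤ (t+1)/3) :
    |(stepA t x).2| ≤ (t+1)/3 := by
  rcases abs_le.mp hx with ⟨hxl, hxu⟩
  unfold stepA
  dsimp only
  rw [abs_le]
  split_ifs <;> (push_cast at * ; constructor <;> linarith)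

lemma stepB_inv {t x : ℝ} (h2 : 2 < t) (h4 : t ≤ 4) (hx : |x| ≤ 1) :
    |(stepB t x).2| ≤ 1 := by
  rcases abs_le.mp hx with ⟨hxl, hxu⟩
  unfold stepB
  dsimp only
  rw [abs_le]
  split_ifs <;> (push_cast at * ; constructor <;> linarith)

lemma grA_inv {t : ℝ} (h1 : 1 ≤ t) (h2 : t ≤ 2) : ∀ i, |(gr t i).2| ≤ (t+1)/3 := by
  intro i
  induction i with
  | zero =>
    unfold gr; rw [if_pos h2]
    rw [abs_le]; constructor <;> [skip; skip] <;> simp only <;> linarith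
  | succ i ih =>
    match i with
    | 0 =>
      show |(gr t 1).2| ≤ (t+1)/3
      unfold gr; rw [if_pos h2]
      exact stepA_inv h1 h2 ih
    | (i+1) =>
      show |(gr t (i+2)).2| ≤ (t+1)/3
      unfold gr; rw [if_pos h2]
      exact stepA_inv h1 h2 ih

lemma grB_inv {t : ℝ} (h2 : 2 < t) (h4 : t ≤ 4) : ∀ i, |(gr t i).2| ≤ 1 := by
  intro i
  induction i with
  | zero =>
    unfold gr; rw [if_neg (by linarith)]
    norm_num
  | succ i ih =>
    match i with
    | 0 =>
      show |(gr t 1).2| ≤ 1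
      unfold gr; rw [if_neg (by linarith)]
      rw [abs_le]; constructor <;> simp only <;> linarith
    | (i+1) =>
      show |(gr t (i+2)).2| ≤ 1
      unfold gr; rw [if_neg (by linarith)]
      exact stepB_inv h2 h4 ih

lemma gr_inv {t : ℝ} (h1 : 1 ≤ t) (h4 : t ≤ 4) (i : ℕ) : |(gr t i).2| ≤ 1 := by
  by_cases h2 : t ≤ 2
  · exact (grA_inv h1 h2 i).trans (by linarith)
  · push_neg at h2
    exact grB_inv h2 h4 i

lemma stepA_spec (t x : ℝ) :
    (stepA t x).2 = 4*x + ((stepA t x).1.2 : ℝ)*t + ((stepA t x).1.1 : ℝ) := rfl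

lemma stepB_spec (t x : ℝ) :
    (stepB t x).2 = 4*x + ((stepB t x).1.2 : ℝ)*t + ((stepB t x).1.1 : ℝ) := rfl

lemma gr_rec (t : ℝ) (i : ℕ) :
    (gr t (i+1)).2 = 4*(gr t i).2 + (((gr t (i+1)).1.1 : ℝ) + ((gr t (i+1)).1.2 : ℝ)*t) := by
  match i with
  | 0 =>
    show (gr t 1).2 = _
    by_cases h2 : t ≤ 2
    · rw [gr_one, if_pos h2, stepA_spec]
      ring
    · rw [gr_one, if_neg h2, gr_zero, if_neg h2]
      push_cast
      norm_num
      ring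
  | (i+1) =>
    show (gr t (i+2)).2 = 4*(gr t (i+1)).2 + _
    by_cases h2 : t ≤ 2
    · rw [gr_two, if_pos h2, stepA_spec]
      ring
    · rw [gr_two, if_neg h2, stepB_spec]
      ring

lemma gr_first (t : ℝ) : (gr t 0).2 = ((gr t 0).1.1 : ℝ) + ((gr t 0).1.2 : ℝ) * t := by
  unfold gr; split_ifs <;> push_cast <;> ring

lemma gr_val (t : ℝ) : ∀ i,
    (gr t i).2 = 4^(i+1) * sVal t (fun j => (gr t j).1.1) (fun j => (gr t j).1.2) (i+1) := by
  intro i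
  induction i with
  | zero =>
    rw [gr_first]
    unfold sVal
    rw [Finset.sum_range_one]
    field_simp
  | succ i ih =>
    rw [gr_rec t i, ih]
    unfold sVal
    conv_rhs => rw [Finset.sum_range_succ]
    have h4 : ((4:ℝ))^(i+1+1) = 4^(i+1)*4 := by ring
    rw [h4]
    have hne : ((4:ℝ))^(i+1+1) ≠ 0 := by positivity
    have hne' : ((4:ℝ))^(i+1)*4 ≠ 0 := by positivity
    rw [mul_add, mul_div_assoc', mul_div_cancel_left₀ _ hne']
    ring


lemma zabs_le {z : ℤ} (h : |z| ≤ 1) : |(z:ℝ)| ≤ 1 := by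
  have : ((|z|:ℤ):ℝ) ≤ 1 := by exact_mod_cast h
  rwa [Int.cast_abs] at this

lemma lead_lower (c : ℕ → ℝ) (hc : ∀ j, |c j| ≤ 1) (hc0 : c 0 = -1) (k : ℕ) :
    1/6 ≤ |∑ j ∈ Finset.range (k+1), c j / 4^(j+1)| := by
  rw [Finset.sum_range_succ']
  have htail : |∑ i ∈ Finset.range k, c (i+1) / 4^(i+1+1)| ≤ 1/12 := by
    rw [sum_shift (fun i => c (i+1)) k, abs_div, show |(4:ℝ)| = 4 from by norm_num]
    have := sum_digits_le (fun i => c (i+1)) (fun i => hc _) k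
    linarith
  have h0 : c 0 / 4^(0+1) = -(1/4) := by rw [hc0]; norm_num
  rw [h0]
  rcases abs_le.mp htail with ⟨hl, hr⟩
  have hneg : (∑ i ∈ Finset.range k, c (i+1) / 4^(i+1+1)) + -(1/4) ≤ -(1/6) := by linarith
  calc (1:ℝ)/6 ≤ -((∑ i ∈ Finset.range k, c (i+1) / 4^(i+1+1)) + -(1/4)) := by linarith
    _ ≤ |(∑ i ∈ Finset.range k, c (i+1) / 4^(i+1+1)) + -(1/4)| := neg_le_abs _

lemma Bsum_lower {t : ℝ} (h1 : 1 ≤ t) (h4 : t ≤ 4) (k : ℕ) :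
    1/24 ≤ |∑ j ∈ Finset.range (k+2), ((gr t j).1.2 : ℝ) / 4^(j+1)| := by
  have hcast : ∀ j, |((gr t j).1.2 : ℝ)| ≤ 1 := fun j => zabs_le (gr_digits t j).2
  by_cases h2 : t ≤ 2
  · have hb0 : ((gr t 0).1.2 : ℝ) = -1 := by rw [gr_zero, if_pos h2]; norm_num
    have := lead_lower (fun j => ((gr t j).1.2:ℝ)) hcast hb0 (k+1)
    calc (1:ℝ)/24 ≤ 1/6 := by norm_num
      _ ≤ _ := this
  · have hb1 : ((gr t 1).1.2 : ℝ) = -1 := by rw [gr_one, if_neg h2]; norm_num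
    rw [Finset.sum_range_succ']
    have h0 : ((gr t 0).1.2 : ℝ) / 4^(0+1) = 0 := by
      rw [gr_zero, if_neg h2]; norm_num
    rw [h0, add_zero, sum_shift (fun i => ((gr t (i+1)).1.2:ℝ)) (k+1), abs_div,
      show |(4:ℝ)| = 4 from by norm_num]
    have := lead_lower (fun i => ((gr t (i+1)).1.2:ℝ)) (fun i => hcast _) hb1 k
    linarith

lemma sVal_linear (a b : ℕ → ℤ) (n : ℕ) (t t₀ : ℝ) :
    sVal t a b n = sVal t₀ a b n + (t - t₀) * ∑ j ∈ Finset.range n, (b j : ℝ)/4^(j+1) := by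
  unfold sVal
  rw [Finset.mul_sum, ← Finset.sum_add_distrib]
  apply Finset.sum_congr rfl
  intro j _
  ring

lemma porosity {η u : ℝ} {m : ℕ} (hη0 : 0 < η) (hη1 : η ≤ 1)
    (hu1 : 1 ≤ u) (hu4 : u + (4:ℝ)⁻¹^m ≤ 4) :
    ∃ v δ : ℝ, 3*η*(4:ℝ)⁻¹^(m+4) ≤ δ ∧
      Set.Icc v (v+δ) ⊆ Set.Icc u (u + (4:ℝ)⁻¹^m) ∧
      ∀ t ∈ Set.Icc v (v+δ), ¬ SepT η t := by
  have hρpos : 0 < (4:ℝ)⁻¹^m := by positivity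
  have hρle1 : (4:ℝ)⁻¹^m ≤ 1 := by
    apply pow_le_one₀ <;> norm_num
  set ρ := (4:ℝ)⁻¹^m with hρ
  set t₀ := u + ρ/2 with ht₀
  have ht₀1 : 1 ≤ t₀ := by rw [ht₀]; linarith
  have ht₀4 : t₀ ≤ 4 := by rw [ht₀]; linarith
  have h4n : (4:ℝ)⁻¹^(m+4) = ρ * (4:ℝ)⁻¹^4 := by rw [pow_add]
  have h4npos : 0 < (4:ℝ)⁻¹^(m+4) := by positivity
  set A := fun j => (gr t₀ j).1.1 with hA
  set Bb := fun j => (gr t₀ j).1.2 with hB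
  set x := sVal t₀ A Bb (m+4) with hx
  have hxeq : x = (gr t₀ (m+3)).2 / 4^(m+4) := by
    rw [hx]
    have := gr_val t₀ (m+3)
    rw [show m+3+1 = m+4 from rfl] at this
    rw [this]
    field_simp
    rfl
  have hxle : |x| ≤ (4:ℝ)⁻¹^(m+4) := by
    rw [hxeq, abs_div, show |(4:ℝ)^(m+4)| = 4^(m+4) from abs_of_pos (by positivity)]
    rw [inv_pow, ← one_div]
    apply div_le_div_of_nonneg_right ?_ (by positivity)
    · exact gr_inv ht₀1 ht₀4 (m+3)
  set σ := ∑ j ∈ Finset.range (m+4), (Bb j:ℝ)/4^(j+1) with hσ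
  have hσl : 1/24 ≤ |σ| := by
    rw [hσ, show m+4 = (m+2)+2 from by omega]
    exact Bsum_lower ht₀1 ht₀4 (m+2)
  have hσu : |σ| ≤ 1/3 := sum_digits_le _ (fun j => zabs_le (gr_digits t₀ j).2) (m+4)
  have hσ0 : σ ≠ 0 := by
    intro h0
    rw [h0, abs_zero] at hσl
    linarith
  have hσa : 0 < |σ| := abs_pos.2 hσ0
  set v := t₀ - x/σ with hv
  set δ := η * (4:ℝ)⁻¹^(m+4) / |σ| with hδ
  have hδpos : 0 < δ := by rw [hδ]; positivity
  have hδl : 3*η*(4:ℝ)⁻¹^(m+4) ≤ δ := by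
    rw [hδ]
    rw [show 3*η*(4:ℝ)⁻¹^(m+4) = η * (4:ℝ)⁻¹^(m+4) / (1/3) from by ring]
    apply div_le_div_of_nonneg_left (by positivity) hσa hσu
  have hδu : δ ≤ 24*(4:ℝ)⁻¹^(m+4) := by
    rw [hδ, show 24*(4:ℝ)⁻¹^(m+4) = (4:ℝ)⁻¹^(m+4)/(1/24) from by ring]
    apply div_le_div₀ (by positivity) ?_ (by norm_num) hσl
    · nlinarith
  have hxσ : |x/σ| ≤ 24*(4:ℝ)⁻¹^(m+4) := by
    rw [abs_div, show 24*(4:ℝ)⁻¹^(m+4) = (4:ℝ)⁻¹^(m+4)/(1/24) from by ring]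
    exact div_le_div₀ (by positivity) hxle (by norm_num) hσl
  have h256 : (4:ℝ)⁻¹^(m+4) = ρ/256 := by
    rw [h4n]; norm_num; ring
  rcases abs_le.mp hxσ with ⟨hxσl, hxσr⟩
  rw [h256] at hxσl hxσr hδu
  refine ⟨v, δ, hδl, ?_, ?_⟩
  · apply Set.Icc_subset_Icc
    · rw [hv, ht₀]
      linarith
    · rw [hv, ht₀]
      linarith
  · intro t ht hSep
    have hval := hSep (m+4) (by omega) A Bb (fun j => (gr_digits t₀ j).1)
      (fun j => (gr_digits t₀ j).2)
      ⟨0, by omega, Or.inl (by rw [hA]; simp only [gr_a0]; decide)⟩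
    have hlin := sVal_linear A Bb (m+4) t t₀
    have hfac : sVal t A Bb (m+4) = σ * (t - v) := by
      rw [hlin, ← hx, ← hσ, hv]
      field_simp
      ring
    rcases ht with ⟨htl, htr⟩
    have htv : |t - v| ≤ δ := by
      rw [abs_le]; constructor <;> linarith
    have hbound : |sVal t A Bb (m+4)| ≤ η * (4:ℝ)⁻¹^(m+4) := by
      rw [hfac, abs_mul]
      calc |σ| * |t - v| ≤ |σ| * δ := mul_le_mul_of_nonneg_left htv (abs_nonneg _)
        _ = η * (4:ℝ)⁻¹^(m+4) := by
            rw [hδ]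
            field_simp
    linarith


lemma adic (η : ℝ) (hη0 : 0 < η) (hη1 : η ≤ 1) (s : ℕ)
    (hs : 2*(4:ℝ)⁻¹^s ≤ 3*η*(4:ℝ)⁻¹^4) :
    ∀ d : ℕ, ∀ m : ℕ, ∀ u : ℝ, 1 ≤ u → u + (4:ℝ)⁻¹^m ≤ 4 →
      volume ({t | SepT η t} ∩ Set.Icc u (u + (4:ℝ)⁻¹^m))
        ≤ (ENNReal.ofReal (1 - (4:ℝ)⁻¹^s))^d * ENNReal.ofReal ((4:ℝ)⁻¹^m) := by
  intro d
  induction d with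
  | zero =>
    intro m u hu1 hu4
    rw [pow_zero, one_mul]
    calc volume ({t | SepT η t} ∩ Set.Icc u (u + (4:ℝ)⁻¹^m))
        ≤ volume (Set.Icc u (u + (4:ℝ)⁻¹^m)) := measure_mono Set.inter_subset_right
      _ = ENNReal.ofReal ((4:ℝ)⁻¹^m) := by rw [Real.volume_Icc, add_sub_cancel_left]
  | succ d ih =>
    intro m u hu1 hu4
    obtain ⟨v, δ, hδl, hsub, hgood⟩ := porosity hη0 hη1 hu1 hu4
    have hLpos : (0:ℝ) < (4:ℝ)⁻¹^(m+s) := by positivity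
    set L : ℝ := (4:ℝ)⁻¹^(m+s) with hL
    have hLeq : L = (4:ℝ)⁻¹^m * (4:ℝ)⁻¹^s := pow_add _ _ _
    have hmpos : (0:ℝ) < (4:ℝ)⁻¹^m := by positivity
    have hδpos : 0 < δ := lt_of_lt_of_le (by positivity) hδl
    have h2L : 2*L ≤ δ := by
      have := mul_le_mul_of_nonneg_left hs (le_of_lt hmpos)
      calc 2*L = (4:ℝ)⁻¹^m * (2*(4:ℝ)⁻¹^s) := by rw [hLeq]; ring
        _ ≤ (4:ℝ)⁻¹^m * (3*η*(4:ℝ)⁻¹^4) := this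
        _ = 3*η*(4:ℝ)⁻¹^(m+4) := by rw [pow_add]; ring
        _ ≤ δ := hδl
    have hvmem : v ∈ Set.Icc u (u + (4:ℝ)⁻¹^m) := hsub ⟨le_refl v, by linarith⟩
    have hvdmem : v + δ ∈ Set.Icc u (u + (4:ℝ)⁻¹^m) := hsub ⟨by linarith, le_refl _⟩
    have hvu : u ≤ v := hvmem.1
    have hvd : v + δ ≤ u + (4:ℝ)⁻¹^m := hvdmem.2
    -- choose the special cell index
    set i₀ : ℕ := ⌈(v - u)/L⌉₊ with hi₀def
    have hvuL : 0 ≤ (v - u)/L := div_nonneg (by linarith) (le_of_lt hLpos)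
    have hps : (4:ℝ)^s * (4:ℝ)⁻¹^s = 1 := by rw [← mul_pow]; norm_num
    have h4L : (4:ℝ)^s * L = (4:ℝ)⁻¹^m := by
      rw [hLeq]
      linear_combination (4:ℝ)⁻¹^m * hps
    have hcell_low : v ≤ u + i₀*L := by
      have := Nat.le_ceil ((v - u)/L)
      rw [← hi₀def] at this
      rw [div_le_iff₀ hLpos] at this
      linarith
    have hcell_high : u + (i₀+1)*L ≤ v + δ := by
      have hceil : (i₀ : ℝ) < (v - u)/L + 1 := by
        rw [hi₀def]
        exact Nat.ceil_lt_add_one hvuL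
      rw [div_add' _ _ _ (ne_of_gt hLpos), lt_div_iff₀ hLpos] at hceil
      linarith
    have hi₀lt : i₀ < 4^s := by
      have h1 : u + (i₀+1)*L ≤ u + (4:ℝ)⁻¹^m := le_trans hcell_high hvd
      have h2 : ((i₀:ℝ)+1)*L ≤ 4^s * L := by
        rw [h4L]
        linarith
      have h3 : ((i₀:ℝ)+1) ≤ 4^s := le_of_mul_le_mul_right h2 hLpos
      have : (i₀:ℝ) < 4^s := by linarith
      exact_mod_cast (by push_cast at this ⊢; linarith : ((i₀:ℕ):ℝ) < ((4^s : ℕ):ℝ)) |> Nat.cast_lt.mp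
    -- covering
    have hcover : {t | SepT η t} ∩ Set.Icc u (u + (4:ℝ)⁻¹^m)
        ⊆ ⋃ i ∈ (Finset.range (4^s)).erase i₀,
            ({t | SepT η t} ∩ Set.Icc (u + i*L) (u + i*L + L)) := by
      rintro t ⟨htS, htl, htr⟩
      have htu : 0 ≤ (t - u)/L := by
        apply div_nonneg _ (le_of_lt hLpos); linarith
      set i : ℕ := min (4^s - 1) ⌊(t - u)/L⌋₊ with hidef
      have hcell : t ∈ Set.Icc (u + i*L) (u + i*L + L) := by
        rcases le_or_gt ⌊(t - u)/L⌋₊ (4^s - 1) with hc | hc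
        · have hieq : i = ⌊(t - u)/L⌋₊ := min_eq_right hc
          constructor
          · have := Nat.floor_le htu
            rw [← hieq, le_div_iff₀ hLpos] at this
            linarith
          · have := Nat.lt_floor_add_one ((t - u)/L)
            rw [← hieq] at this
            rw [div_lt_iff₀ hLpos] at this
            linarith
        · have hieq : i = 4^s - 1 := min_eq_left (le_of_lt hc)
          have hge : (4^s : ℝ) ≤ (t - u)/L := by
            have h1 : (4^s : ℕ) ≤ ⌊(t - u)/L⌋₊ := by omega
            calc ((4:ℝ))^s = ((4^s : ℕ) : ℝ) := by push_cast; ring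
              _ ≤ (⌊(t - u)/L⌋₊ : ℝ) := by exact_mod_cast h1
              _ ≤ (t - u)/L := Nat.floor_le htu
          have hteq : u + (4:ℝ)⁻¹^m ≤ t := by
            rw [le_div_iff₀ hLpos] at hge
            nlinarith [h4L]
          have hteq2 : t = u + (4:ℝ)⁻¹^m := le_antisymm htr hteq
          have hpow1 : (1:ℕ) ≤ 4^s := Nat.one_le_pow _ _ (by norm_num)
          have hcast : ((4^s - 1 : ℕ) : ℝ) = (4:ℝ)^s - 1 := by
            push_cast [Nat.cast_sub hpow1]
            ring
          rw [hieq]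
          constructor
          · rw [hcast, hteq2]
            nlinarith
          · rw [hcast, hteq2]
            nlinarith
      have hine : i ≠ i₀ := by
        intro heq
        apply hgood t _ htS
        have hsub2 : Set.Icc (u + i*L) (u + i*L + L) ⊆ Set.Icc v (v + δ) := by
          apply Set.Icc_subset_Icc
          · rw [heq]; linarith
          · rw [heq]; linarith [hcell_high]
        exact hsub2 hcell
      rw [Set.mem_iUnion]
      refine ⟨i, ?_⟩
      rw [Set.mem_iUnion]
      refine ⟨Finset.mem_erase.2 ⟨hine, Finset.mem_range.2 ?_⟩, ⟨htS, hcell⟩⟩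
      have : 4^s - 1 < 4^s := by omega
      omega
    -- measure estimate
    calc volume ({t | SepT η t} ∩ Set.Icc u (u + (4:ℝ)⁻¹^m))
        ≤ ∑ i ∈ (Finset.range (4^s)).erase i₀,
            volume ({t | SepT η t} ∩ Set.Icc (u + i*L) (u + i*L + L)) :=
          le_trans (measure_mono hcover) (measure_biUnion_finset_le _ _)
      _ ≤ ∑ i ∈ (Finset.range (4^s)).erase i₀,
            (ENNReal.ofReal (1 - (4:ℝ)⁻¹^s))^d * ENNReal.ofReal ((4:ℝ)⁻¹^(m+s)) := by
          apply Finset.sum_le_sum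
          intro i hi
          have hi4 : i < 4^s := Finset.mem_range.1 (Finset.mem_erase.1 hi).2
          have hu1' : 1 ≤ u + i*L := by
            have : (0:ℝ) ≤ i*L := by positivity
            linarith
          have hu4' : (u + i*L) + (4:ℝ)⁻¹^(m+s) ≤ 4 := by
            have hile : ((i:ℝ)+1) ≤ 4^s := by
              have : (i:ℝ) + 1 ≤ ((4^s : ℕ):ℝ) := by exact_mod_cast Nat.succ_le_of_lt hi4
              calc (i:ℝ) + 1 ≤ ((4^s : ℕ):ℝ) := this
                _ = (4:ℝ)^s := by push_cast; ring
            have : u + ((i:ℝ)+1)*L ≤ u + (4:ℝ)^s * L :=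
              (add_le_add_iff_left u).2 (mul_le_mul_of_nonneg_right hile (le_of_lt hLpos))
            rw [h4L] at this
            calc (u + i*L) + (4:ℝ)⁻¹^(m+s) = u + ((i:ℝ)+1)*L := by rw [hL]; ring
              _ ≤ u + (4:ℝ)⁻¹^m := this
              _ ≤ 4 := hu4
          exact ih (m+s) (u + i*L) hu1' hu4'
      _ = (ENNReal.ofReal (1 - (4:ℝ)⁻¹^s))^(d+1) * ENNReal.ofReal ((4:ℝ)⁻¹^m) := by
          rw [Finset.sum_const, Finset.card_erase_of_mem (Finset.mem_range.2 hi₀lt),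
            nsmul_eq_mul, Finset.card_range]
          have hofL : ((4^s - 1 : ℕ) : ℝ≥0∞) * ENNReal.ofReal ((4:ℝ)⁻¹^(m+s))
              = ENNReal.ofReal (1 - (4:ℝ)⁻¹^s) * ENNReal.ofReal ((4:ℝ)⁻¹^m) := by
            have hpow1 : (1:ℕ) ≤ 4^s := Nat.one_le_pow _ _ (by norm_num)
            have hcast : ((4^s - 1 : ℕ) : ℝ) = (4:ℝ)^s - 1 := by
              push_cast [Nat.cast_sub hpow1]
              ring
            have hsle : (4:ℝ)⁻¹^s ≤ 1 := by
              apply pow_le_one₀ <;> norm_num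
            rw [← ENNReal.ofReal_natCast, ← ENNReal.ofReal_mul (by positivity),
              ← ENNReal.ofReal_mul (by linarith)]
            congr 1
            rw [hcast, pow_add]
            linear_combination (4:ℝ)⁻¹^m * hps
          calc ((4^s - 1 : ℕ) : ℝ≥0∞)
                * ((ENNReal.ofReal (1 - (4:ℝ)⁻¹^s))^d * ENNReal.ofReal ((4:ℝ)⁻¹^(m+s)))
              = (ENNReal.ofReal (1 - (4:ℝ)⁻¹^s))^d
                  * (((4^s - 1 : ℕ) : ℝ≥0∞) * ENNReal.ofReal ((4:ℝ)⁻¹^(m+s))) := by ring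
            _ = (ENNReal.ofReal (1 - (4:ℝ)⁻¹^s))^d
                  * (ENNReal.ofReal (1 - (4:ℝ)⁻¹^s) * ENNReal.ofReal ((4:ℝ)⁻¹^m)) := by
                rw [hofL]
            _ = (ENNReal.ofReal (1 - (4:ℝ)⁻¹^s))^(d+1) * ENNReal.ofReal ((4:ℝ)⁻¹^m) := by
                rw [pow_succ]
                ring

lemma sep_null (η : ℝ) (hη0 : 0 < η) (hη1 : η ≤ 1) :
    volume ({t | SepT η t} ∩ Set.Icc (1:ℝ) 4) = 0 := by
  obtain ⟨s, hs⟩ := exists_pow_lt_of_lt_one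
    (show 0 < 3*η*(4:ℝ)⁻¹^4/2 by positivity) (show (4:ℝ)⁻¹ < 1 by norm_num)
  have hs' : 2*(4:ℝ)⁻¹^s ≤ 3*η*(4:ℝ)⁻¹^4 := by linarith
  set q := ENNReal.ofReal (1 - (4:ℝ)⁻¹^s) with hq
  have hql : q < 1 := by
    rw [hq]
    have h1 : 0 < (4:ℝ)⁻¹^s := by positivity
    exact ENNReal.ofReal_lt_one.2 (by linarith)
  have htend := ENNReal.tendsto_pow_atTop_nhds_zero_of_lt_one hql
  have key : ∀ u : ℝ, 1 ≤ u → u + 1 ≤ 4 →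
      volume ({t | SepT η t} ∩ Set.Icc u (u+1)) = 0 := by
    intro u h1 h4
    have hbound : ∀ d, volume ({t | SepT η t} ∩ Set.Icc u (u+1)) ≤ q^d := by
      intro d
      have h2 := adic η hη0 hη1 s hs' d 0 u h1 (by simpa using h4)
      simp only [pow_zero, ENNReal.ofReal_one, mul_one] at h2
      rw [hq]
      exact h2
    have hle := ge_of_tendsto' htend hbound
    exact le_antisymm hle zero_le
  have hcover : {t | SepT η t} ∩ Set.Icc (1:ℝ) 4 ⊆
      ({t | SepT η t} ∩ Set.Icc (1:ℝ) (1+1)) ∪ ({t | SepT η t} ∩ Set.Icc (2:ℝ) (2+1))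
        ∪ ({t | SepT η t} ∩ Set.Icc (3:ℝ) (3+1)) := by
    rintro t ⟨htS, htl, htr⟩
    rcases le_or_gt t 2 with hc | hc
    · exact Or.inl (Or.inl ⟨htS, htl, by norm_num; linarith⟩)
    rcases le_or_gt t 3 with hc2 | hc2
    · exact Or.inl (Or.inr ⟨htS, by linarith, by norm_num; linarith⟩)
    · exact Or.inr ⟨htS, by linarith, by norm_num; linarith⟩
  apply le_antisymm _ zero_le
  calc volume ({t | SepT η t} ∩ Set.Icc (1:ℝ) 4)
      ≤ volume (({t | SepT η t} ∩ Set.Icc (1:ℝ) (1+1)) ∪ ({t | SepT η t} ∩ Set.Icc (2:ℝ) (2+1))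
        ∪ ({t | SepT η t} ∩ Set.Icc (3:ℝ) (3+1))) := measure_mono hcover
    _ ≤ volume (({t | SepT η t} ∩ Set.Icc (1:ℝ) (1+1)) ∪ ({t | SepT η t} ∩ Set.Icc (2:ℝ) (2+1)))
        + volume ({t | SepT η t} ∩ Set.Icc (3:ℝ) (3+1)) := measure_union_le _ _
    _ ≤ (volume ({t | SepT η t} ∩ Set.Icc (1:ℝ) (1+1))
        + volume ({t | SepT η t} ∩ Set.Icc (2:ℝ) (2+1)))
        + volume ({t | SepT η t} ∩ Set.Icc (3:ℝ) (3+1)) := by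
          gcongr
          exact measure_union_le _ _
    _ = 0 := by
        rw [key 1 (by norm_num) (by norm_num), key 2 (by norm_num) (by norm_num),
          key 3 (by norm_num) (by norm_num)]
        simp

/-- monotonicity of SepT in η -/
lemma SepT_mono {η η' t : ℝ} (h : η' ≤ η) (hsep : SepT η t) : SepT η' t := by
  intro n hn a b ha hb hne
  have := hsep n hn a b ha hb hne
  have h4 : (0:ℝ) < (4:ℝ)⁻¹ ^ n := by positivity
  nlinarith

/-- scaling: knowledge at `t` transfers to `t/4^r` -/
lemma SepT_scale {η t : ℝ} (r : ℕ) (hsep : SepT η t) :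
    SepT (η * (4:ℝ)⁻¹^r) (t * (4:ℝ)⁻¹^r) := by
  intro n hn a b ha hb ⟨j1, hj1n, hj1⟩
  set a' : ℕ → ℤ := fun j => if j < n then a j else 0 with ha'
  set b' : ℕ → ℤ := fun j => if r ≤ j ∧ j < n + r then b (j - r) else 0 with hb'
  have ha'b : ∀ j, |a' j| ≤ 1 := by
    intro j; rw [ha']; dsimp only; split_ifs
    · exact ha j
    · norm_num
  have hb'b : ∀ j, |b' j| ≤ 1 := by
    intro j; rw [hb']; dsimp only; split_ifs
    · exact hb _
    · norm_num
  have hwit : ∃ j, j < n + r ∧ (a' j ≠ 0 ∨ b' j ≠ 0) := by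
    rcases hj1 with hja | hjb
    · exact ⟨j1, by omega, Or.inl (by rw [ha']; dsimp only; rw [if_pos hj1n]; exact hja)⟩
    · refine ⟨j1 + r, by omega, Or.inr ?_⟩
      rw [hb']; dsimp only
      rw [if_pos ⟨by omega, by omega⟩]
      simpa using hjb
  have hkey := hsep (n+r) (by omega) a' b' ha'b hb'b hwit
  have hval : sVal t a' b' (n+r) = sVal (t * (4:ℝ)⁻¹^r) a b n := by
    unfold sVal
    have hsplit : ∀ j ∈ Finset.range (n+r),
        ((a' j : ℝ) + (b' j : ℝ) * t) / 4 ^ (j+1)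
          = (a' j : ℝ)/4^(j+1) + (b' j : ℝ) * t/4^(j+1) := by
      intro j _; ring
    rw [Finset.sum_congr rfl hsplit, Finset.sum_add_distrib]
    have hA : ∑ j ∈ Finset.range (n+r), (a' j : ℝ)/4^(j+1)
        = ∑ j ∈ Finset.range n, (a j : ℝ)/4^(j+1) := by
      rw [← Finset.sum_subset (Finset.range_subset_range.2 (by omega : n ≤ n + r))]
      · apply Finset.sum_congr rfl
        intro j hj
        rw [ha']; dsimp only
        rw [if_pos (Finset.mem_range.1 hj)]
      · intro j hj hjn
        have hnot : ¬ j < n := fun hcon => hjn (Finset.mem_range.2 hcon)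
        rw [ha']; dsimp only
        rw [if_neg hnot]
        norm_num
    have hBsum : ∑ j ∈ Finset.range (n+r), (b' j : ℝ) * t/4^(j+1)
        = ∑ j ∈ Finset.range n, (b j : ℝ) * (t * (4:ℝ)⁻¹^r)/4^(j+1) := by
      have hsub : Finset.Ico r (n+r) ⊆ Finset.range (n+r) := by
        intro j hj
        rw [Finset.mem_range]
        exact (Finset.mem_Ico.1 hj).2
      rw [← Finset.sum_subset hsub]
      · rw [Finset.sum_Ico_eq_sum_range]
        have hnn : n + r - r = n := by omega
        rw [hnn]
        apply Finset.sum_congr rfl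
        intro i hi
        rw [Finset.mem_range] at hi
        rw [hb']; dsimp only
        rw [if_pos ⟨by omega, by omega⟩]
        have hri : r + i - r = i := by omega
        rw [hri]
        have hexp : (4:ℝ)^(r+i+1) = 4^(i+1) * 4^r := by
          rw [show r+i+1 = (i+1)+r from by omega, pow_add]
        rw [hexp]
        have h4r : ((4:ℝ)^r) ≠ 0 := by positivity
        have h4i : ((4:ℝ)^(i+1)) ≠ 0 := by positivity
        rw [inv_pow, eq_div_iff (by positivity)]
        field_simp
      · intro j hj hjn
        have : ¬ (r ≤ j ∧ j < n + r) := by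
          rw [Finset.mem_range] at hj
          rw [Finset.mem_Ico] at hjn
          omega
        rw [hb']; dsimp only
        rw [if_neg this]
        norm_num
    rw [hA, hBsum, ← Finset.sum_add_distrib]
    apply Finset.sum_congr rfl
    intro j _
    ring
  rw [hval] at hkey
  calc η * (4:ℝ)⁻¹^r * (4:ℝ)⁻¹^n = η * (4:ℝ)⁻¹^(n+r) := by rw [pow_add]; ring
    _ < _ := hkey

/-- inversion: knowledge at `t ≤ 1` transfers to `t⁻¹` -/
lemma SepT_inv {η t : ℝ} (ht : 0 < t) (ht1 : t ≤ 1) (hsep : SepT η t) (hη0 : 0 < η) :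
    SepT η t⁻¹ := by
  intro n hn a b ha hb ⟨j1, hj1, hw⟩
  have hkey := hsep n hn b a hb ha ⟨j1, hj1, hw.symm⟩
  have htne : t ≠ 0 := ne_of_gt ht
  have hval : sVal t⁻¹ a b n = t⁻¹ * sVal t b a n := by
    unfold sVal
    rw [Finset.mul_sum]
    apply Finset.sum_congr rfl
    intro j _
    have h4 : ((4:ℝ)^(j+1)) ≠ 0 := by positivity
    field_simp
    ring
  rw [hval, abs_mul, abs_of_pos (inv_pos.2 ht)]
  have h1t : 1 ≤ t⁻¹ := one_le_inv_iff₀.2 ⟨ht, ht1⟩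
  nlinarith [abs_nonneg (sVal t b a n), pow_pos (show (0:ℝ) < 4⁻¹ by norm_num) n]

/-- the bad parameter set -/
def Tbad : Set ℝ := {t | 0 < t ∧ ∃ η, 0 < η ∧ η ≤ 1 ∧ SepT η t}

lemma Tbad14_null : volume (Tbad ∩ Set.Icc 1 4) = 0 := by
  have hsub : Tbad ∩ Set.Icc 1 4 ⊆
      ⋃ k : ℕ, ({t | SepT (1/(k+1)) t} ∩ Set.Icc (1:ℝ) 4) := by
    rintro t ⟨⟨htpos, η, hη0, hη1, hsep⟩, htI⟩
    obtain ⟨k, hk⟩ := exists_nat_one_div_lt hη0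
    rw [Set.mem_iUnion]
    refine ⟨k, ⟨SepT_mono (le_of_lt (by exact_mod_cast hk)) hsep, htI⟩⟩
  apply le_antisymm _ zero_le
  calc volume (Tbad ∩ Set.Icc 1 4)
      ≤ volume (⋃ k : ℕ, ({t | SepT (1/(k+1)) t} ∩ Set.Icc (1:ℝ) 4)) := measure_mono hsub
    _ ≤ ∑' k : ℕ, volume ({t | SepT (1/(k+1):ℝ) t} ∩ Set.Icc (1:ℝ) 4) := measure_iUnion_le _
    _ = 0 := by
        rw [ENNReal.tsum_eq_zero]
        intro k
        apply sep_null
        · positivity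
        · rw [div_le_one (by positivity)]
          have : (1:ℝ) ≤ (k:ℝ) + 1 := by
            have : (0:ℝ) ≤ (k:ℝ) := Nat.cast_nonneg k
            linarith
          exact this

lemma lip_null {f : ℝ → ℝ} {s : Set ℝ} {Kc : NNReal}
    (hf : LipschitzOnWith Kc f s) (hs : volume s = 0) : volume (f '' s) = 0 := by
  have h1 := hf.hausdorffMeasure_image_le (show (0:ℝ) ≤ 1 by norm_num)
  rw [MeasureTheory.hausdorffMeasure_real, hs, mul_zero] at h1
  exact le_antisymm h1 zero_le

lemma Tbad_smul_mem {t : ℝ} (htb : t ∈ Tbad) (ht1 : 1 ≤ t) :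
    ∃ r : ℕ, t * (4:ℝ)⁻¹^r ∈ Tbad ∩ Set.Icc 1 4 ∧ t = (4:ℝ)^r * (t * (4:ℝ)⁻¹^r) := by
  classical
  obtain ⟨htpos, η, hη0, hη1, hsep⟩ := htb
  have hex : ∃ n : ℕ, t < 4^n := pow_unbounded_of_one_lt t (by norm_num)
  set n₀ := Nat.find hex with hn₀
  have hlt : t < 4^n₀ := Nat.find_spec hex
  have hn₀pos : 1 ≤ n₀ := by
    by_contra hc
    push_neg at hc
    have h0 : n₀ = 0 := by omega
    rw [h0] at hlt
    simp at hlt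
    linarith
  set r := n₀ - 1 with hr
  have hge : (4:ℝ)^r ≤ t := by
    by_contra hc
    push_neg at hc
    exact Nat.find_min hex (show r < n₀ by omega) hc
  have h41 : t < 4^(r+1) := by rw [show r+1 = n₀ by omega]; exact hlt
  have hpow : (4:ℝ)^r * (4:ℝ)⁻¹^r = 1 := by
    rw [← mul_pow]; norm_num
  have hprod : 0 < (4:ℝ)⁻¹^r := by positivity
  have hprod4 : 0 < (4:ℝ)^r := by positivity
  refine ⟨r, ⟨⟨by positivity, ⟨η*(4:ℝ)⁻¹^r, by positivity, ?_, SepT_scale r hsep⟩⟩, ?_, ?_⟩, ?_⟩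
  · have hle1 : (4:ℝ)⁻¹^r ≤ 1 := by
      apply pow_le_one₀ <;> norm_num
    nlinarith
  · -- 1 ≤ t * 4⁻¹^r
    nlinarith
  · -- t * 4⁻¹^r ≤ 4
    have : t * (4:ℝ)⁻¹^r < 4^(r+1) * (4:ℝ)⁻¹^r := by
      exact mul_lt_mul_of_pos_right h41 hprod
    have h2 : (4:ℝ)^(r+1) * (4:ℝ)⁻¹^r = 4 := by
      rw [pow_succ]
      nlinarith
    linarith [h2 ▸ this]
  · rw [← mul_assoc]
    nlinarith

lemma Tbad_null : volume Tbad = 0 := by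
  have part1 : volume (Tbad ∩ Set.Ici 1) = 0 := by
    have hsub : Tbad ∩ Set.Ici 1 ⊆ ⋃ r : ℕ, ((4:ℝ)^r) • (Tbad ∩ Set.Icc 1 4) := by
      rintro t ⟨htb, ht1⟩
      obtain ⟨r, hmem, heq⟩ := Tbad_smul_mem htb ht1
      rw [Set.mem_iUnion]
      exact ⟨r, ⟨t * (4:ℝ)⁻¹^r, hmem, by show (4:ℝ)^r • (t * (4:ℝ)⁻¹^r) = t; rw [smul_eq_mul]; exact heq.symm⟩⟩
    apply le_antisymm _ zero_le
    calc volume (Tbad ∩ Set.Ici 1)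
        ≤ volume (⋃ r : ℕ, ((4:ℝ)^r) • (Tbad ∩ Set.Icc 1 4)) := measure_mono hsub
      _ ≤ ∑' r : ℕ, volume (((4:ℝ)^r) • (Tbad ∩ Set.Icc 1 4)) := measure_iUnion_le _
      _ = 0 := by
          rw [ENNReal.tsum_eq_zero]
          intro r
          rw [Measure.addHaar_smul, Tbad14_null, mul_zero]
  have part2 : volume (Tbad ∩ Set.Iio 1) = 0 := by
    have hsub : Tbad ∩ Set.Iio 1 ⊆ (fun x : ℝ => x⁻¹) '' (Tbad ∩ Set.Ici 1) := by
      rintro t ⟨⟨htpos, η, hη0, hη1, hsep⟩, htlt⟩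
      rw [Set.mem_Iio] at htlt
      refine ⟨t⁻¹, ⟨⟨inv_pos.2 htpos, η, hη0, hη1,
        SepT_inv htpos (le_of_lt htlt) hsep hη0⟩, ?_⟩, inv_inv t⟩
      exact Set.mem_Ici.2 (one_le_inv_iff₀.2 ⟨htpos, le_of_lt htlt⟩)
    have hlip : LipschitzOnWith 1 (fun x : ℝ => x⁻¹) (Tbad ∩ Set.Ici 1) := by
      apply LipschitzOnWith.of_dist_le_mul
      rintro x ⟨-, hx⟩ y ⟨-, hy⟩
      rw [Set.mem_Ici] at hx hy
      rw [NNReal.coe_one, one_mul, Real.dist_eq, Real.dist_eq]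
      have hx0 : (0:ℝ) < x := lt_of_lt_of_le one_pos hx
      have hy0 : (0:ℝ) < y := lt_of_lt_of_le one_pos hy
      have hxy : x⁻¹ - y⁻¹ = (y - x) / (x*y) := by field_simp
      have hxypos : (0:ℝ) < x * y := by positivity
      rw [hxy, abs_div, abs_of_pos hxypos]
      have h1xy : 1 ≤ x*y := by nlinarith
      calc |y - x|/(x*y) ≤ |y - x| := div_le_self (abs_nonneg _) h1xy
        _ = |x - y| := abs_sub_comm _ _
    apply le_antisymm _ zero_le
    calc volume (Tbad ∩ Set.Iio 1)
        ≤ volume ((fun x : ℝ => x⁻¹) '' (Tbad ∩ Set.Ici 1)) := measure_mono hsub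
      _ = 0 := lip_null hlip part1
  have hsplit : Tbad ⊆ (Tbad ∩ Set.Ici 1) ∪ (Tbad ∩ Set.Iio 1) := by
    intro t ht
    rcases le_or_gt 1 t with hc | hc
    · exact Or.inl ⟨ht, hc⟩
    · exact Or.inr ⟨ht, hc⟩
  apply le_antisymm _ zero_le
  calc volume Tbad ≤ volume ((Tbad ∩ Set.Ici 1) ∪ (Tbad ∩ Set.Iio 1)) := measure_mono hsplit
    _ ≤ volume (Tbad ∩ Set.Ici 1) + volume (Tbad ∩ Set.Iio 1) := measure_union_le _ _
    _ = 0 := by rw [part1, part2, add_zero]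


/-- the set of bad heights is null -/
lemma Kbad_null : volume {h : ℝ | h ∈ Set.Ioo (0:ℝ) 1 ∧ volume (K h) ≠ 0} = 0 := by
  have hsub : {h : ℝ | h ∈ Set.Ioo (0:ℝ) 1 ∧ volume (K h) ≠ 0}
      ⊆ (fun t : ℝ => t/(t+2)) '' Tbad := by
    rintro h ⟨⟨h0, h1⟩, hKne⟩
    obtain ⟨η, hη0, hη1, hsep⟩ := sep_of_pos h0 h1 hKne
    have htpos : 0 < 2*h/(1-h) := by
      apply div_pos (by linarith) (by linarith)
    refine ⟨2*h/(1-h), ⟨htpos, η, hη0, hη1, hsep⟩, ?_⟩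
    have hne : (1:ℝ) - h ≠ 0 := by intro hc; linarith
    field_simp
    ring
  have hlip : LipschitzOnWith 1 (fun t : ℝ => t/(t+2)) Tbad := by
    apply LipschitzOnWith.of_dist_le_mul
    rintro x ⟨hx, -⟩ y ⟨hy, -⟩
    rw [NNReal.coe_one, one_mul, Real.dist_eq, Real.dist_eq]
    have hx2 : (0:ℝ) < x + 2 := by linarith
    have hy2 : (0:ℝ) < y + 2 := by linarith
    have hkey : x/(x+2) - y/(y+2) = 2*(x - y) / ((x+2)*(y+2)) := by
      field_simp
      ring
    rw [hkey, abs_div, abs_mul, abs_two, abs_mul, abs_of_pos hx2, abs_of_pos hy2,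
      div_le_iff₀ (mul_pos hx2 hy2)]
    have h4 : (4:ℝ) ≤ (x+2)*(y+2) := by nlinarith
    nlinarith [abs_nonneg (x - y)]
  apply le_antisymm _ zero_le
  calc volume {h : ℝ | h ∈ Set.Ioo (0:ℝ) 1 ∧ volume (K h) ≠ 0}
      ≤ volume ((fun t : ℝ => t/(t+2)) '' Tbad) := measure_mono hsub
    _ = 0 := lip_null hlip Tbad_null

lemma B_mem_iff (x h : ℝ) : (x + h*Complex.I ∈ B) ↔
    (h ∈ Set.Icc (0:ℝ) 1 ∧ x ∈ K h) := by
  constructor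
  · rintro ⟨x', hx', y', hy', h', hh', heq⟩
    have him : h = h' := by
      have := congrArg Complex.im heq
      simpa using this
    have hre : x = (1-h')*x' + 2*h'*y' := by
      have := congrArg Complex.re heq
      simp at this
      rw [this]
      ring
    subst him
    exact ⟨hh', ⟨(x', y'), ⟨hx', hy'⟩, hre.symm⟩⟩
  · rintro ⟨hh, ⟨⟨x', y'⟩, ⟨hx', hy'⟩, hre⟩⟩
    simp only at hre
    refine ⟨x', hx', y', hy', h, hh, ?_⟩
    rw [← hre]
    push_cast
    ring

theorem volume_B_eq_zero_aux : volume B = 0 := by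
  classical
  set e := Complex.measurableEquivRealProd with he
  have hBc : IsCompact B := B_isCompact
  have hec : Continuous (fun z : ℂ => (z.re, z.im)) := by fun_prop
  have hSc : IsCompact ((fun z : ℂ => (z.re, z.im)) '' B) := hBc.image hec
  have hSmeas : MeasurableSet ((fun z : ℂ => (z.re, z.im)) '' B) := hSc.isClosed.measurableSet
  have himg : ⇑e '' B = (fun z : ℂ => (z.re, z.im)) '' B := rfl
  have hpre : B = e ⁻¹' (e '' B) := by
    rw [Set.preimage_image_eq _ e.injective]
  have h1 : volume B = (volume.prod volume) ((fun z : ℂ => (z.re, z.im)) '' B) := by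
    calc volume B = volume (⇑e ⁻¹' ((fun z : ℂ => (z.re, z.im)) '' B)) := by
          rw [← himg, ← hpre]
      _ = (volume.prod volume) ((fun z : ℂ => (z.re, z.im)) '' B) :=
          Complex.volume_preserving_equiv_real_prod.measure_preimage hSmeas.nullMeasurableSet
  rw [h1, Measure.prod_apply_symm hSmeas]
  have hslice : ∀ h : ℝ, (fun x => (x, h)) ⁻¹' ((fun z : ℂ => (z.re, z.im)) '' B)
      = {x : ℝ | x + h*Complex.I ∈ B} := by
    intro h
    ext x
    simp only [Set.mem_preimage, Set.mem_image, Set.mem_setOf_eq]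
    constructor
    · rintro ⟨z, hz, hze⟩
      have : z = x + h*Complex.I := by
        apply Complex.ext
        · simpa using congrArg Prod.fst hze
        · simpa using congrArg Prod.snd hze
      rwa [← this]
    · intro hx
      exact ⟨x + h*Complex.I, hx, by simp⟩
  have hae : ∀ᵐ h : ℝ, volume ((fun x => (x, h)) ⁻¹' ((fun z : ℂ => (z.re, z.im)) '' B)) = 0 := by
    have hbad : volume ({h : ℝ | h ∈ Set.Ioo (0:ℝ) 1 ∧ volume (K h) ≠ 0} ∪ {0, 1}) = 0 := by
      apply measure_union_null Kbad_null
      exact ((Set.finite_singleton (1:ℝ)).insert 0).measure_zero _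
    have hae0 := (measure_eq_zero_iff_ae_notMem).1 hbad
    filter_upwards [hae0] with h hh
    rw [hslice h]
    simp only [Set.mem_union, Set.mem_insert_iff, Set.mem_singleton_iff, not_or,
      Set.mem_setOf_eq, not_and] at hh
    obtain ⟨hh1, hh2, hh3⟩ := hh
    by_cases hIcc : h ∈ Set.Icc (0:ℝ) 1
    · have hIoo : h ∈ Set.Ioo (0:ℝ) 1 := by
        rcases hIcc with ⟨hl, hr⟩
        exact ⟨lt_of_le_of_ne hl (Ne.symm hh2), lt_of_le_of_ne hr hh3⟩
      have hKh : volume (K h) = 0 := by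
        by_contra hne
        exact (hh1 hIoo) hne
      have heq : {x : ℝ | x + h*Complex.I ∈ B} = K h := by
        ext x
        rw [Set.mem_setOf_eq, B_mem_iff]
        exact ⟨fun hp => hp.2, fun hp => ⟨hIcc, hp⟩⟩
      rw [heq]
      exact hKh
    · have heq : {x : ℝ | x + h*Complex.I ∈ B} = ∅ := by
        ext x
        rw [Set.mem_setOf_eq, B_mem_iff]
        simp only [Set.mem_empty_iff_false, iff_false, not_and]
        intro hc
        exact absurd hc hIcc
      rw [heq]
      exact measure_empty
  calc ∫⁻ h, volume ((fun x => (x, h)) ⁻¹' ((fun z : ℂ => (z.re, z.im)) '' B))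
      = ∫⁻ _, (0:ℝ≥0∞) := lintegral_congr_ae hae
    _ = 0 := lintegral_zero



end BES

/-- The union `B` of the segments joining `E` to `2E + i` has planar Lebesgue
measure zero. -/
theorem volume_B_eq_zero : volume B = 0 := by
  exact BES.volume_B_eq_zero_aux
end
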